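/- arXiv:0811.3595 — 5 statements merged into one kernel-verified Lean document; each statement's English description precedes it below -/
import Mathlib

section
/- (Jucys) For every 0 ≤ r ≤ n, the elementary symmetric polynomial in the Jucys–Murphy elements equals the sum of all permutations with exactly n − r cycles: e_r(J_1,…,J_n) = Σ_{σ ∈ S_n, cycles(σ) = n − r} σ. -/
/-- The Jucys–Murphy element `J_{i+1}` (1-based: `J_1 = 0`,
`J_i = (1,i) + ⋯ + (i-1,i)`) in the complex group algebra of `S_n`. -/
noncomputable def jm (n : ℕ) (i : Fin n) : MonoidAlgebra ℂ (Equiv.Perm (Fin n)) :=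
  ∑ k ∈ Finset.univ.filter (fun k => k < i),
    MonoidAlgebra.of ℂ (Equiv.Perm (Fin n)) (Equiv.swap k i)

/-- The number of orbits of a permutation (cycles, counting fixed points). -/
def cycles {n : ℕ} (σ : Equiv.Perm (Fin n)) : ℕ :=
  σ.cycleType.card + (Finset.univ.filter fun x => σ x = x).card

/-- The `r`-th elementary symmetric polynomial evaluated at the Jucys–Murphy elements:
`e_r(J_1,…,J_n) = Σ_{i_1 < ⋯ < i_r} J_{i_1} ⋯ J_{i_r}` (the JM elements commute, so the
order of the factors is immaterial; we multiply them in increasing order). -/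
noncomputable def eJM (n r : ℕ) : MonoidAlgebra ℂ (Equiv.Perm (Fin n)) :=
  ∑ s ∈ Finset.univ.powersetCard r, ((s.sort (· ≤ ·)).map (jm n)).prod

open Equiv Equiv.Perm Finset

section cyc
set_option linter.unusedSectionVars false

variable {α : Type*} [DecidableEq α] [Fintype α]

lemma pow_fix {c : Perm α} {m : α} (hm : c m = m) (i : ℕ) : (c ^ i) m = m := by
  induction i with
  | zero => rfl
  | succ i ih => rw [pow_succ, Equiv.Perm.mul_apply, hm, ih]

lemma isCycle_mul_swap {c : Perm α} (hc : c.IsCycle) {k m : α}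
    (hk : c k ≠ k) (hm : c m = m) (hkm : k ≠ m) : (c * Equiv.swap k m).IsCycle := by
  set g := c * Equiv.swap k m with hg
  have hgk : g k = m := by
    simp only [hg, Equiv.Perm.mul_apply, Equiv.swap_apply_left, hm]
  have hgm : g m = c k := by
    simp only [hg, Equiv.Perm.mul_apply, Equiv.swap_apply_right]
  have korbit : ∀ i : ℕ, (c ^ i) k ≠ m := by
    intro i h
    exact hkm ((c ^ i).injective (h.trans (pow_fix hm i).symm))
  refine ⟨k, by rw [hgk]; exact hkm.symm, fun y hy => ?_⟩
  by_cases hyk : y = k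
  · subst hyk; exact Equiv.Perm.SameCycle.refl _ _
  by_cases hym : y = m
  · subst hym; exact ⟨1, by simpa using hgk⟩
  have hcy : c y ≠ y := by
    have : g y = c y := by
      simp only [hg, Equiv.Perm.mul_apply, Equiv.swap_apply_of_ne_of_ne hyk hym]
    rwa [this] at hy
  have hsc : Equiv.Perm.SameCycle c k y := hc.sameCycle hk hcy
  obtain ⟨i0, _, hi0⟩ := hsc.exists_pow_eq'
  have hP : ∃ j : ℕ, (c ^ j) k = y := ⟨i0, hi0⟩
  classical
  set j := Nat.find hP with hjdef
  have hj : (c ^ j) k = y := Nat.find_spec hP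
  have hmin : ∀ i < j, (c ^ i) k ≠ y := fun i hi => Nat.find_min hP hi
  have hj0 : j ≠ 0 := by
    intro h
    rw [h] at hj; simp at hj; exact hyk hj.symm
  have claim : ∀ i, 1 ≤ i → i ≤ j → (g ^ (i + 1)) k = (c ^ i) k := by
    intro i h1 h2
    induction i with
    | zero => omega
    | succ i ih =>
      rcases Nat.eq_or_lt_of_le h1 with h|h
      · have : i = 0 := by omega
        subst this
        show (g ^ 2) k = (c ^ 1) k
        rw [pow_two, Equiv.Perm.mul_apply, hgk, hgm, pow_one]
      · have hi1 : 1 ≤ i := by omega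
        have hij : i ≤ j := by omega
        have ihh := ih hi1 hij
        have hnek : (c ^ i) k ≠ k := by
          intro h0
          have hlt : j - i < j := by omega
          apply hmin _ hlt
          have hexp : (c ^ j) k = (c ^ (j - i)) ((c ^ i) k) := by
            rw [← Equiv.Perm.mul_apply, ← pow_add, Nat.sub_add_cancel hij]
          rw [← hj, hexp, h0]
        have hnem : (c ^ i) k ≠ m := korbit i
        have hstep : (g ^ (i + 1 + 1)) k = g ((g ^ (i + 1)) k) := by
          rw [pow_succ' g (i + 1), Equiv.Perm.mul_apply]
        rw [hstep, ihh, hg, Equiv.Perm.mul_apply,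
          Equiv.swap_apply_of_ne_of_ne hnek hnem, ← Equiv.Perm.mul_apply,
          ← pow_succ' c i]
  refine ⟨((j : ℤ) + 1), ?_⟩
  have : ((j : ℤ) + 1) = ((j + 1 : ℕ) : ℤ) := by push_cast; ring
  rw [this, zpow_natCast, claim j (by omega) le_rfl, hj]


end cyc

lemma fixed_card_add_support {n : ℕ} (σ : Perm (Fin n)) :
    (Finset.univ.filter fun x => σ x = x).card + σ.support.card = n := by
  classical
  have : σ.support = Finset.univ.filter fun x => σ x ≠ x := by
    ext x; simp [Equiv.Perm.mem_support]
  rw [this]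
  rw [Finset.card_filter_add_card_filter_not (fun x => σ x = x)]
  · simp
  all_goals infer_instance

lemma cycles_one {n : ℕ} : cycles (1 : Perm (Fin n)) = n := by
  unfold cycles
  simp

lemma cycles_pos {n : ℕ} (hn : 1 ≤ n) (σ : Perm (Fin n)) : 1 ≤ cycles σ := by
  unfold cycles
  by_contra h
  push_neg at h
  have h1 : Multiset.card σ.cycleType = 0 := by omega
  have h2 : σ = 1 := Equiv.Perm.card_cycleType_eq_zero.mp h1
  subst h2
  have : (Finset.univ.filter fun x => (1 : Perm (Fin n)) x = x).card = n := by simp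
  omega

lemma eq_one_of_cycles_eq {n : ℕ} {σ : Perm (Fin n)} (h : cycles σ = n) : σ = 1 := by
  classical
  have h2 : 2 * Multiset.card σ.cycleType ≤ σ.cycleType.sum := by
    have := Multiset.card_nsmul_le_sum (s := σ.cycleType) (a := 2)
      (fun x hx => Equiv.Perm.two_le_of_mem_cycleType hx)
    simpa [mul_comm] using this
  rw [Equiv.Perm.sum_cycleType] at h2
  have h3 := fixed_card_add_support σ
  unfold cycles at h
  have : σ.support.card = 0 := by omega
  rw [Finset.card_eq_zero, Equiv.Perm.support_eq_empty_iff] at this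
  exact this

lemma sort_insert_max {n : ℕ} {s : Finset (Fin n)} {a : Fin n}
    (h : ∀ x ∈ s, x < a) (ha : a ∉ s) :
    (insert a s).sort (· ≤ ·) = s.sort (· ≤ ·) ++ [a] := by
  refine (fun hp h1 h2 => List.Perm.eq_of_pairwise' h1 h2 hp) ?_ (Finset.pairwise_sort _ _) ?_
  · rw [← Multiset.coe_eq_coe]
    have h1 : ((insert a s).sort (· ≤ ·) : Multiset (Fin n)) = (insert a s).val :=
      Finset.sort_eq _ _
    have h2 : ((s.sort (· ≤ ·) ++ [a] : List (Fin n)) : Multiset (Fin n))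
        = (s.sort (· ≤ ·) : Multiset (Fin n)) + ([a] : List (Fin n)) := by
      rw [← Multiset.coe_add]
    rw [h1, h2, Finset.sort_eq, Finset.insert_val_of_notMem ha]
    change _ = s.val + {a}
    rw [add_comm]
    rfl
  · rw [List.pairwise_append]
    refine ⟨Finset.pairwise_sort _ _, List.pairwise_singleton _ _, ?_⟩
    intro x hx y hy
    rw [List.mem_singleton] at hy
    subst hy
    exact (h x ((Finset.mem_sort _).mp hx)).le

lemma cycles_mul_swap {n : ℕ} {τ : Perm (Fin n)} {k m : Fin n}
    (hm : τ m = m) (hkm : k ≠ m) :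
    cycles (τ * Equiv.swap k m) + 1 = cycles τ := by
  classical
  set g := τ * Equiv.swap k m with hg
  have hgk : g k = m := by
    simp only [hg, Equiv.Perm.mul_apply, Equiv.swap_apply_left, hm]
  have hgm : g m = τ k := by
    simp only [hg, Equiv.Perm.mul_apply, Equiv.swap_apply_right]
  have hτkm : τ k ≠ m := fun h => hkm (τ.injective (h.trans hm.symm))
  have hgx : ∀ x, x ≠ k → x ≠ m → g x = τ x := fun x h1 h2 => by
    simp only [hg, Equiv.Perm.mul_apply, Equiv.swap_apply_of_ne_of_ne h1 h2]
  by_cases hk : τ k = k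
  · -- disjoint case
    have hdisj : τ.Disjoint (Equiv.swap k m) := by
      intro x
      by_cases h1 : x = k
      · subst h1; exact Or.inl hk
      by_cases h2 : x = m
      · subst h2; exact Or.inl hm
      · exact Or.inr (Equiv.swap_apply_of_ne_of_ne h1 h2)
    have hswap1 : Multiset.card (Equiv.swap k m).cycleType = 1 :=
      Equiv.Perm.card_cycleType_eq_one.mpr (Equiv.Perm.isCycle_swap hkm)
    have hct : Multiset.card g.cycleType = Multiset.card τ.cycleType + 1 := by
      rw [hg, hdisj.cycleType_mul, Multiset.card_add, hswap1]
    have hkF : g k ≠ k := by rw [hgk]; exact hkm.symm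
    have hmF : g m ≠ m := by rw [hgm, hk]; exact hkm
    have hFeq : insert k (insert m (Finset.univ.filter fun x => g x = x)) =
        (Finset.univ.filter fun x => τ x = x) := by
      ext x
      simp only [Finset.mem_insert, Finset.mem_filter, Finset.mem_univ, true_and]
      constructor
      · rintro (rfl|rfl|h)
        · exact hk
        · exact hm
        · by_cases h1 : x = k
          · subst h1; exact hk
          by_cases h2 : x = m
          · subst h2; exact hm
          · rwa [hgx x h1 h2] at h
      · intro h
        by_cases h1 : x = k
        · exact Or.inl h1
        by_cases h2 : x = m
        · exact Or.inr (Or.inl h2)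
        · exact Or.inr (Or.inr (by rwa [hgx x h1 h2]))
    have hknotin : k ∉ insert m (Finset.univ.filter fun x => g x = x) := by
      simp only [Finset.mem_insert, Finset.mem_filter, Finset.mem_univ, true_and]
      push_neg
      exact ⟨hkm, hkF⟩
    have hmnotin : m ∉ (Finset.univ.filter fun x => g x = x) := by
      simp only [Finset.mem_filter, Finset.mem_univ, true_and]
      exact hmF
    have hcard : (Finset.univ.filter fun x => τ x = x).card =
        (Finset.univ.filter fun x => g x = x).card + 2 := by
      rw [← hFeq, Finset.card_insert_of_notMem hknotin,
        Finset.card_insert_of_notMem hmnotin]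
    unfold cycles
    rw [hct, hcard]
    omega
  · -- join case
    set c := τ.cycleOf k with hc
    have hck : c k = τ k := τ.cycleOf_apply_self k
    have hckk : c k ≠ k := by rwa [hck]
    have hcyc : c.IsCycle := Equiv.Perm.isCycle_cycleOf τ hk
    have hcm : c m = m := by
      rw [hc, Equiv.Perm.cycleOf_apply]
      split <;> simp [hm]
    have hmem : c ∈ τ.cycleFactorsFinset :=
      Equiv.Perm.cycleOf_mem_cycleFactorsFinset_iff.mpr (Equiv.Perm.mem_support.2 hk)
    set d := τ * c⁻¹ with hd
    have hdisj : d.Disjoint c :=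
      Equiv.Perm.disjoint_mul_inv_of_mem_cycleFactorsFinset hmem
    have hτeq : d * c = τ := by rw [hd]; group
    have hdm : d m = m := by
      have hcm' : c⁻¹ m = m := by
        rw [Equiv.Perm.inv_eq_iff_eq]; exact hcm.symm
      rw [hd, Equiv.Perm.mul_apply, hcm', hm]
    have hdk : d k = k := (hdisj k).resolve_right hckk
    set c' := c * Equiv.swap k m with hc'
    have hc'cyc : c'.IsCycle := isCycle_mul_swap hcyc hckk hcm hkm
    have hdisj' : d.Disjoint c' := by
      intro x
      by_cases h1 : x = k
      · subst h1; exact Or.inl hdk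
      by_cases h2 : x = m
      · subst h2; exact Or.inl hdm
      rcases hdisj x with h|h
      · exact Or.inl h
      · refine Or.inr ?_
        rw [hc', Equiv.Perm.mul_apply, Equiv.swap_apply_of_ne_of_ne h1 h2, h]
    have hgdc : g = d * c' := by rw [hg, hc', ← hτeq]; group
    have hct : g.cycleType.card = τ.cycleType.card := by
      rw [hgdc, hdisj'.cycleType_mul, ← hτeq, hdisj.cycleType_mul, Multiset.card_add,
        Multiset.card_add, Equiv.Perm.card_cycleType_eq_one.mpr hc'cyc,
        Equiv.Perm.card_cycleType_eq_one.mpr hcyc]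
    have hmF : g m ≠ m := by rw [hgm]; exact hτkm
    have hFeq : insert m (Finset.univ.filter fun x => g x = x) =
        (Finset.univ.filter fun x => τ x = x) := by
      ext x
      simp only [Finset.mem_insert, Finset.mem_filter, Finset.mem_univ, true_and]
      constructor
      · rintro (rfl|h)
        · exact hm
        · by_cases h1 : x = k
          · subst h1; rw [hgk] at h; exact absurd h.symm hkm
          by_cases h2 : x = m
          · subst h2; exact hm
          · rwa [hgx x h1 h2] at h
      · intro h
        by_cases h2 : x = m
        · exact Or.inl h2
        by_cases h1 : x = k
        · subst h1; exact absurd h hk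
        · exact Or.inr (by rwa [hgx x h1 h2])
    have hmnotin : m ∉ (Finset.univ.filter fun x => g x = x) := by
      simp only [Finset.mem_filter, Finset.mem_univ, true_and]
      exact hmF
    have hcard : (Finset.univ.filter fun x => τ x = x).card =
        (Finset.univ.filter fun x => g x = x).card + 1 := by
      rw [← hFeq, Finset.card_insert_of_notMem hmnotin]
    unfold cycles
    rw [hct, hcard]
    omega

lemma key_zero (n m : ℕ) :
    ∑ s ∈ (Finset.univ.filter (fun i : Fin n => (i : ℕ) < m)).powersetCard 0,
        ((s.sort (· ≤ ·)).map (jm n)).prod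
    = ∑ σ ∈ Finset.univ.filter
        (fun σ : Equiv.Perm (Fin n) =>
          (∀ i : Fin n, m ≤ (i : ℕ) → σ i = i) ∧ cycles σ = n - 0),
        MonoidAlgebra.of ℂ (Equiv.Perm (Fin n)) σ := by
  classical
  have hfilter : Finset.univ.filter
      (fun σ : Equiv.Perm (Fin n) =>
        (∀ i : Fin n, m ≤ (i : ℕ) → σ i = i) ∧ cycles σ = n - 0)
      = {1} := by
    ext σ
    simp only [Finset.mem_filter, Finset.mem_univ, true_and, Finset.mem_singleton,
      Nat.sub_zero]
    constructor
    · rintro ⟨-, h⟩; exact eq_one_of_cycles_eq h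
    · rintro rfl; exact ⟨fun i _ => rfl, cycles_one⟩
  rw [hfilter, Finset.sum_singleton, Finset.powersetCard_zero, Finset.sum_singleton,
    Finset.sort_empty]
  simp [MonoidAlgebra.one_def]

lemma key (n : ℕ) (hn : 1 ≤ n) :
    ∀ m, m ≤ n → ∀ r : ℕ,
    ∑ s ∈ (Finset.univ.filter (fun i : Fin n => (i : ℕ) < m)).powersetCard r,
        ((s.sort (· ≤ ·)).map (jm n)).prod
    = ∑ σ ∈ Finset.univ.filter
        (fun σ : Equiv.Perm (Fin n) =>
          (∀ i : Fin n, m ≤ (i : ℕ) → σ i = i) ∧ cycles σ = n - r),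
        MonoidAlgebra.of ℂ (Equiv.Perm (Fin n)) σ := by
  classical
  intro m
  induction m with
  | zero =>
    intro _ r
    match r with
    | 0 => exact key_zero n 0
    | r + 1 =>
      have hD : (Finset.univ.filter (fun i : Fin n => (i : ℕ) < 0)) = ∅ := by
        ext i; simp
      rw [hD]
      have h1 : (∅ : Finset (Fin n)).powersetCard (r + 1) = ∅ :=
        Finset.powersetCard_eq_empty.mpr (by simp)
      rw [h1, Finset.sum_empty]
      have h2 : Finset.univ.filter
          (fun σ : Equiv.Perm (Fin n) =>
            (∀ i : Fin n, 0 ≤ (i : ℕ) → σ i = i) ∧ cycles σ = n - (r + 1)) = ∅ := by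
        ext σ
        simp only [Finset.mem_filter, Finset.mem_univ, true_and, Finset.notMem_empty,
          iff_false, not_and]
        intro hfix
        have : σ = 1 := Equiv.ext fun x => by
          rw [hfix x (Nat.zero_le _)]; rfl
        subst this
        rw [cycles_one]
        omega
      rw [h2, Finset.sum_empty]
  | succ m ih =>
    intro hm1 r
    have hm : m < n := hm1
    have ihm := ih (le_of_lt hm)
    match r with
    | 0 => exact key_zero n (m + 1)
    | r + 1 =>
      set M : Fin n := ⟨m, hm⟩ with hM
      have hMval : (M : ℕ) = m := rfl
      set D : Finset (Fin n) := Finset.univ.filter (fun i : Fin n => (i : ℕ) < m) with hDdef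
      have hMnot : M ∉ D := by simp [hDdef, hM]
      have hD : (Finset.univ.filter (fun i : Fin n => (i : ℕ) < m + 1)) = insert M D := by
        ext i
        simp only [Finset.mem_filter, Finset.mem_univ, true_and, Finset.mem_insert, hDdef]
        constructor
        · intro h
          rcases Nat.lt_succ_iff_lt_or_eq.mp h with h | h
          · exact Or.inr h
          · exact Or.inl (Fin.ext h)
        · rintro (rfl | h)
          · omega
          · omega
      rw [hD, Finset.powersetCard_succ_insert hMnot]
      have hdisj : Disjoint (D.powersetCard (r + 1)) ((D.powersetCard r).image (insert M)) := by
        rw [Finset.disjoint_left]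
        intro s hs hs'
        obtain ⟨t, ht, rfl⟩ := Finset.mem_image.mp hs'
        have : insert M t ⊆ D := (Finset.mem_powersetCard.mp hs).1
        exact hMnot (this (Finset.mem_insert_self _ _))
      rw [Finset.sum_union hdisj]
      have himage : ∑ s ∈ (D.powersetCard r).image (insert M),
          ((s.sort (· ≤ ·)).map (jm n)).prod
          = (∑ s ∈ D.powersetCard r, ((s.sort (· ≤ ·)).map (jm n)).prod) * jm n M := by
        rw [Finset.sum_image, Finset.sum_mul]
        · apply Finset.sum_congr rfl
          intro s hs
          have hsD : s ⊆ D := (Finset.mem_powersetCard.mp hs).1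
          have hMs : M ∉ s := fun h => hMnot (hsD h)
          have hlt : ∀ x ∈ s, x < M := by
            intro x hx
            have := hsD hx
            simp only [hDdef, Finset.mem_filter, Finset.mem_univ, true_and] at this
            exact this
          rw [sort_insert_max hlt hMs, List.map_append, List.prod_append]
          simp
        · intro s hs t ht h
          have hMs : M ∉ s := fun hh => hMnot ((Finset.mem_powersetCard.mp hs).1 hh)
          have hMt : M ∉ t := fun hh => hMnot ((Finset.mem_powersetCard.mp ht).1 hh)
          rw [← Finset.erase_insert hMs, ← Finset.erase_insert hMt, h]
      rw [himage, ihm (r + 1), ihm r]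
      -- now the permutation side
      set A := Finset.univ.filter
        (fun τ : Equiv.Perm (Fin n) =>
          (∀ i : Fin n, m ≤ (i : ℕ) → τ i = i) ∧ cycles τ = n - r) with hA
      set B := Finset.univ.filter (fun k : Fin n => k < M) with hB
      have hjm : jm n M = ∑ k ∈ B, MonoidAlgebra.of ℂ (Equiv.Perm (Fin n)) (Equiv.swap k M) := rfl
      rw [hjm, Finset.sum_mul_sum]
      simp_rw [← map_mul]
      rw [← Finset.sum_product']
      set S := Finset.univ.filter
        (fun σ : Equiv.Perm (Fin n) =>
          (∀ i : Fin n, m + 1 ≤ (i : ℕ) → σ i = i) ∧ cycles σ = n - (r + 1)) with hS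
      rw [← Finset.sum_filter_add_sum_filter_not S (fun σ => σ M = M)
        (fun σ => MonoidAlgebra.of ℂ (Equiv.Perm (Fin n)) σ)]
      congr 1
      · -- σ M = M part
        apply Finset.sum_congr _ (fun _ _ => rfl)
        ext σ
        simp only [hS, Finset.mem_filter, Finset.mem_univ, true_and]
        constructor
        · rintro ⟨hfix, hcyc⟩
          exact ⟨⟨fun i hi => hfix i (by omega), hcyc⟩, hfix M (le_of_eq hMval.symm)⟩
        · rintro ⟨⟨hfix, hcyc⟩, hfixM⟩
          refine ⟨fun i hi => ?_, hcyc⟩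
          rcases Nat.lt_or_ge (i : ℕ) (m + 1) with h | h
          · have hieq : (i : ℕ) = m := by omega
            have : i = M := Fin.ext hieq
            subst this; exact hfixM
          · exact hfix i h
      · -- σ M ≠ M part : bijection
        refine Finset.sum_nbij' (i := fun p : Equiv.Perm (Fin n) × Fin n => p.1 * Equiv.swap p.2 M)
          (j := fun σ => (σ * Equiv.swap (σ⁻¹ M) M, σ⁻¹ M)) ?_ ?_ ?_ ?_ ?_
        · rintro ⟨τ, k⟩ hp
          rw [Finset.mem_product] at hp
          obtain ⟨hτ, hk⟩ := hp
          simp only [hA, Finset.mem_filter, Finset.mem_univ, true_and] at hτ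
          simp only [hB, Finset.mem_filter, Finset.mem_univ, true_and] at hk
          obtain ⟨hfix, hcyc⟩ := hτ
          have hkM : k ≠ M := Fin.ne_of_lt hk
          have hτM : τ M = M := hfix M (le_refl m)
          have hcms := cycles_mul_swap hτM hkM
          have hpos := cycles_pos hn (τ * Equiv.swap k M)
          simp only [hS, Finset.mem_filter, Finset.mem_univ, true_and]
          refine ⟨⟨fun i hi => ?_, by omega⟩, ?_⟩
          · have hkv : (k : ℕ) < (M : ℕ) := hk
            have hik : i ≠ k := by
              intro h; rw [h] at hi; omega
            have hiM : i ≠ M := by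
              intro h; rw [h] at hi; omega
            rw [Equiv.Perm.mul_apply, Equiv.swap_apply_of_ne_of_ne hik hiM,
              hfix i (by omega)]
          · -- σ M ≠ M
            rw [Equiv.Perm.mul_apply, Equiv.swap_apply_right]
            intro h
            have : k = M := by
              have := τ.injective (h.trans hτM.symm)
              exact this
            exact hkM this
        · intro σ hσ
          simp only [hS, Finset.mem_filter, Finset.mem_univ, true_and] at hσ
          obtain ⟨⟨hfix, hcyc⟩, hσM⟩ := hσ
          have hσk : σ (σ⁻¹ M) = M := Equiv.apply_symm_apply σ M
          have hkM : σ⁻¹ M ≠ M := by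
            intro h
            rw [h] at hσk
            exact hσM hσk
          have hkval : ((σ⁻¹ M : Fin n) : ℕ) < m := by
            by_contra h
            push_neg at h
            have h1 : ((σ⁻¹ M : Fin n) : ℕ) ≠ m := fun hh => hkM (Fin.ext (hh.trans hMval.symm))
            have h2 : m + 1 ≤ ((σ⁻¹ M : Fin n) : ℕ) := by omega
            have := hfix _ h2
            rw [this] at hσk
            exact hkM hσk
          have hτM : (σ * Equiv.swap (σ⁻¹ M) M) M = M := by
            rw [Equiv.Perm.mul_apply, Equiv.swap_apply_right, hσk]
          have hback : (σ * Equiv.swap (σ⁻¹ M) M) * Equiv.swap (σ⁻¹ M) M = σ := by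
            rw [mul_assoc, Equiv.swap_mul_self, mul_one]
          have hcms := cycles_mul_swap hτM hkM
          rw [hback] at hcms
          have hpos := cycles_pos hn σ
          rw [Finset.mem_product]
          constructor
          · simp only [hA, Finset.mem_filter, Finset.mem_univ, true_and]
            refine ⟨fun i hi => ?_, by omega⟩
            by_cases hiM : i = M
            · subst hiM; exact hτM
            · have hik : i ≠ σ⁻¹ M := by
                intro h; rw [h] at hi; omega
              rw [Equiv.Perm.mul_apply, Equiv.swap_apply_of_ne_of_ne hik hiM]
              have : (i : ℕ) ≠ m := fun hh => hiM (Fin.ext (hh.trans hMval.symm))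
              exact hfix i (by omega)
          · simp only [hB, Finset.mem_filter, Finset.mem_univ, true_and]
            exact hkval
        · rintro ⟨τ, k⟩ hp
          rw [Finset.mem_product] at hp
          obtain ⟨hτ, hk⟩ := hp
          simp only [hA, Finset.mem_filter, Finset.mem_univ, true_and] at hτ
          have hτM : τ M = M := hτ.1 M (le_of_eq hMval.symm)
          have h1 : (τ * Equiv.swap k M) k = M := by
            rw [Equiv.Perm.mul_apply, Equiv.swap_apply_left, hτM]
          have h2 : (τ * Equiv.swap k M)⁻¹ M = k :=
            Equiv.Perm.inv_eq_iff_eq.mpr h1.symm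
          simp only [h2]
          rw [mul_assoc, Equiv.swap_mul_self, mul_one]
        · intro σ hσ
          simp only
          rw [mul_assoc, Equiv.swap_mul_self, mul_one]
        · rintro ⟨τ, k⟩ _
          rfl

/-- Jucys' theorem: `e_r(J_1,…,J_n)` is the sum of all permutations with exactly
`n - r` cycles. -/
theorem eJM_eq_sum_perms_with_cycles (n : ℕ) (hn : 1 ≤ n) (r : ℕ) (hr : r ≤ n) :
    eJM n r =
      ∑ σ ∈ Finset.univ.filter (fun σ : Equiv.Perm (Fin n) => cycles σ = n - r),
        MonoidAlgebra.of ℂ (Equiv.Perm (Fin n)) σ := by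
  classical
  have h := key n hn n le_rfl r
  have hU : (Finset.univ.filter (fun i : Fin n => (i : ℕ) < n)) = Finset.univ := by
    ext i; simp [i.isLt]
  rw [hU] at h
  rw [eJM, h]
  apply Finset.sum_congr _ (fun _ _ => rfl)
  ext σ
  simp only [Finset.mem_filter, Finset.mem_univ, true_and]
  constructor
  · rintro ⟨-, h2⟩; exact h2
  · intro h2
    exact ⟨fun i hi => absurd i.isLt (by omega), h2⟩
end

section
/- For every symmetric polynomial f in n variables over ℂ (that is, every f ∈ MvPolynomial (Fin n) ℂ invariant under all permutations of the variables), the evaluation f(J_1,…,J_n) lies in the center of the group algebra A. -/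
/-- Evaluation of a multivariate polynomial at the Jucys–Murphy elements `(J_1,…,J_n)`.
Since the JM elements pairwise commute, the order of the factors in each monomial is
immaterial; we fix the increasing order of the variables. -/
noncomputable def evalJM (n : ℕ) (f : MvPolynomial (Fin n) ℂ) :
    MonoidAlgebra ℂ (Equiv.Perm (Fin n)) :=
  Finsupp.sum (AddMonoidAlgebra.coeff f) fun m c => c • ((List.finRange n).map fun i => jm n i ^ m i).prod

set_option linter.unusedSectionVars false


open MonoidAlgebra Equiv MvPolynomial Finset

noncomputable section


namespace JMaux

variable {n : ℕ}

local notation "A" => MonoidAlgebra ℂ (Equiv.Perm (Fin n))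
local notation "og" => MonoidAlgebra.of ℂ (Equiv.Perm (Fin n))

lemma swap_mul_swap_eq (τ : Equiv.Perm (Fin n)) (b k : Fin n) :
    τ * Equiv.swap b k = Equiv.swap (τ b) (τ k) * τ := by
  rw [Equiv.swap_apply_apply, inv_mul_cancel_right]

lemma swap_lt_iff {a j k b : Fin n} (ha : a < k) (hj : j < k) :
    Equiv.swap a j b < k ↔ b < k := by
  rcases eq_or_ne b a with rfl | h1
  · simp [Equiv.swap_apply_left, ha, hj]
  rcases eq_or_ne b j with rfl | h2
  · simp [Equiv.swap_apply_right, ha, hj]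
  · rw [Equiv.swap_apply_of_ne_of_ne h1 h2]

lemma jm_commute (j k : Fin n) : Commute (jm n j) (jm n k) := by
  have main : ∀ j k : Fin n, j < k → jm n j * jm n k = jm n k * jm n j := by
    intro j k h
    unfold jm
    rw [Finset.sum_mul_sum, Finset.sum_mul_sum]
    conv_rhs => rw [Finset.sum_comm]
    refine Finset.sum_congr rfl fun a ha => ?_
    simp only [Finset.mem_filter, Finset.mem_univ, true_and] at ha
    have hak : a < k := ha.trans h
    have hka : (k : Fin n) ≠ a := (hak.ne).symm
    have hkj : (k : Fin n) ≠ j := h.ne'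
    refine Finset.sum_equiv (Equiv.swap a j) (fun b => ?_) (fun b hb => ?_)
    · simp only [Finset.mem_filter, Finset.mem_univ, true_and]
      exact (swap_lt_iff hak h).symm
    · rw [← map_mul, ← map_mul, swap_mul_swap_eq,
        Equiv.swap_apply_of_ne_of_ne hka hkj, map_mul]
  rcases lt_trichotomy j k with h | rfl | h
  · exact main j k h
  · rfl
  · exact (main k j h).symm

end JMaux

end


open MonoidAlgebra Equiv MvPolynomial Finset

noncomputable section

namespace JMaux2

variable {R : Type*} {B : Type*} [CommSemiring R] [Semiring B] [Algebra R B]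

/-- Conjugation by an element with two-sided inverse, as an algebra hom. -/
def conjA (x y : B) (h1 : x * y = 1) (h2 : y * x = 1) : B →ₐ[R] B where
  toFun a := x * a * y
  map_one' := by show x * 1 * y = 1; rw [mul_one, h1]
  map_mul' a b := by
    show x * (a * b) * y = (x * a * y) * (x * b * y)
    have hz : ∀ z : B, y * (x * z) = z := fun z => by rw [← mul_assoc, h2, one_mul]
    simp only [mul_assoc, hz]
  map_zero' := by simp
  map_add' a b := by show x * (a + b) * y = x * a * y + x * b * y; rw [mul_add, add_mul]
  commutes' r := by
    show x * algebraMap R B r * y = algebraMap R B r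
    rw [← Algebra.commutes r x, mul_assoc, h1, mul_one]

variable {n : ℕ} (w : Fin n → B) (hw : ∀ i j, Commute (w i) (w j))

/-- Evaluation of a multivariate polynomial at a commuting family. -/
def evFam : MvPolynomial (Fin n) R →ₐ[R] B :=
  letI : CommSemiring (Algebra.adjoin R (Set.range w)) :=
    Algebra.adjoinCommSemiringOfComm R (by
      rintro a ⟨i, rfl⟩ b ⟨j, rfl⟩; exact hw i j)
  ((Algebra.adjoin R (Set.range w)).val).comp
    (MvPolynomial.aeval fun i =>
      (⟨w i, Algebra.subset_adjoin ⟨i, rfl⟩⟩ : Algebra.adjoin R (Set.range w)))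

@[simp] lemma evFam_X (i : Fin n) : evFam (R := R) w hw (X i) = w i := by
  letI : CommSemiring (Algebra.adjoin R (Set.range w)) :=
    Algebra.adjoinCommSemiringOfComm R (by
      rintro a ⟨i, rfl⟩ b ⟨j, rfl⟩; exact hw i j)
  show ((Algebra.adjoin R (Set.range w)).val)
    (MvPolynomial.aeval (fun i =>
      (⟨w i, Algebra.subset_adjoin ⟨i, rfl⟩⟩ : Algebra.adjoin R (Set.range w))) (X i)) = w i
  rw [MvPolynomial.aeval_X]
  rfl

lemma evFam_eq (f : MvPolynomial (Fin n) R) :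
    evFam w hw f = Finsupp.sum (AddMonoidAlgebra.coeff f) fun m c => c • ((List.finRange n).map fun i => w i ^ m i).prod := by
  letI : CommSemiring (Algebra.adjoin R (Set.range w)) :=
    Algebra.adjoinCommSemiringOfComm R (by
      rintro a ⟨i, rfl⟩ b ⟨j, rfl⟩; exact hw i j)
  induction f using MvPolynomial.induction_on' with
  | add p q hp hq =>
    rw [map_add, hp, hq, AddMonoidAlgebra.coeff_add, Finsupp.sum_add_index]
    · intro m _; simp
    · intro m _ c d; rw [add_smul]
  | monomial m c =>
    rw [MvPolynomial.sum_monomial_eq (by simp)]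
    show ((Algebra.adjoin R (Set.range w)).val) (MvPolynomial.aeval _ (monomial m c)) = _
    rw [MvPolynomial.aeval_monomial]
    set b : Fin n → Algebra.adjoin R (Set.range w) :=
      fun i => ⟨w i, Algebra.subset_adjoin ⟨i, rfl⟩⟩ with hb
    have h1 : (Finsupp.prod m fun i k => b i ^ k) = ∏ i, b i ^ m i :=
      Finsupp.prod_fintype _ _ (by intro i; rw [pow_zero])
    have h2 : (∏ i, b i ^ m i) = ((List.finRange n).map fun i => b i ^ m i).prod :=
      Fin.prod_univ_def _
    rw [map_mul, h1, h2, Algebra.smul_def]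
    congr 1
    · rw [map_list_prod ((Algebra.adjoin R (Set.range w)).val), List.map_map]
      rfl

end JMaux2

end


open MvPolynomial Equiv

noncomputable section
namespace JMaux3

variable {n : ℕ} (u v : Fin n)

/-- Generators: variables other than `u, v`, plus `X u + X v` and `X u * X v`. -/
def Sgen : Set (MvPolynomial (Fin n) ℂ) :=
  {p | (∃ k, k ≠ u ∧ k ≠ v ∧ p = X k) ∨ p = X u + X v ∨ p = X u * X v}

lemma e1_mem : X u + X v ∈ Algebra.adjoin ℂ (Sgen u v) :=
  Algebra.subset_adjoin (Or.inr (Or.inl rfl))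

lemma e2_mem : X u * X v ∈ Algebra.adjoin ℂ (Sgen u v) :=
  Algebra.subset_adjoin (Or.inr (Or.inr rfl))

lemma decomp (hne : u ≠ v) (f : MvPolynomial (Fin n) ℂ) :
    ∃ a ∈ Algebra.adjoin ℂ (Sgen u v), ∃ b ∈ Algebra.adjoin ℂ (Sgen u v),
      f = a + b * X v := by
  induction f using MvPolynomial.induction_on with
  | C c =>
    exact ⟨C c, Subalgebra.algebraMap_mem _ c, 0, Subalgebra.zero_mem _, by ring⟩
  | add p q hp hq =>
    obtain ⟨a, ha, b, hb, rfl⟩ := hp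
    obtain ⟨a', ha', b', hb', rfl⟩ := hq
    exact ⟨a + a', Subalgebra.add_mem _ ha ha', b + b', Subalgebra.add_mem _ hb hb', by ring⟩
  | mul_X p k hp =>
    obtain ⟨a, ha, b, hb, rfl⟩ := hp
    rcases eq_or_ne k v with rfl | hkv
    · exact ⟨-(b * (X u * X k)), Subalgebra.neg_mem _ (Subalgebra.mul_mem _ hb (e2_mem u k)),
        a + b * (X u + X k),
        Subalgebra.add_mem _ ha (Subalgebra.mul_mem _ hb (e1_mem u k)), by ring⟩
    rcases eq_or_ne k u with rfl | hku
    · exact ⟨a * (X k + X v) + b * (X k * X v),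
        Subalgebra.add_mem _ (Subalgebra.mul_mem _ ha (e1_mem k v))
          (Subalgebra.mul_mem _ hb (e2_mem k v)),
        -a, Subalgebra.neg_mem _ ha, by ring⟩
    · have hX : X k ∈ Algebra.adjoin ℂ (Sgen u v) :=
        Algebra.subset_adjoin (Or.inl ⟨k, hku, hkv, rfl⟩)
      exact ⟨a * X k, Subalgebra.mul_mem _ ha hX, b * X k, Subalgebra.mul_mem _ hb hX, by ring⟩

lemma rename_fixed (x : MvPolynomial (Fin n) ℂ) (hx : x ∈ Algebra.adjoin ℂ (Sgen u v)) :
    rename (Equiv.swap u v) x = x := by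
  have hle : Algebra.adjoin ℂ (Sgen u v) ≤
      AlgHom.equalizer (rename (Equiv.swap u v)) (AlgHom.id ℂ (MvPolynomial (Fin n) ℂ)) := by
    rw [Algebra.adjoin_le_iff]
    rintro p (⟨k, hku, hkv, rfl⟩ | rfl | rfl) <;>
      simp only [SetLike.mem_coe, AlgHom.mem_equalizer, AlgHom.id_apply]
    · rw [rename_X, Equiv.swap_apply_of_ne_of_ne hku hkv]
    · rw [map_add, rename_X, rename_X, Equiv.swap_apply_left, Equiv.swap_apply_right, add_comm]
    · rw [map_mul, rename_X, rename_X, Equiv.swap_apply_left, Equiv.swap_apply_right, mul_comm]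
  exact hle hx

lemma mem_adjoin_of_symm (hne : u ≠ v) (f : MvPolynomial (Fin n) ℂ)
    (hf : rename (Equiv.swap u v) f = f) : f ∈ Algebra.adjoin ℂ (Sgen u v) := by
  obtain ⟨a, ha, b, hb, hab⟩ := decomp u v hne f
  have h2 : f = a + b * X u := by
    conv_lhs => rw [← hf, hab]
    rw [map_add, map_mul, rename_fixed u v a ha, rename_fixed u v b hb, rename_X,
      Equiv.swap_apply_right]
  have h3 : (2 : ℂ) • f = (a + a) + b * (X u + X v) :=
    calc (2 : ℂ) • f = f + f := two_smul ℂ f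
      _ = (a + b * X v) + (a + b * X u) := by nth_rewrite 1 [hab]; rw [h2]
      _ = (a + a) + b * (X u + X v) := by ring
  have h4 : (2 : ℂ) • f ∈ Algebra.adjoin ℂ (Sgen u v) := by
    rw [h3]
    exact Subalgebra.add_mem _ (Subalgebra.add_mem _ ha ha)
      (Subalgebra.mul_mem _ hb (e1_mem u v))
  have h5 : f = (2⁻¹ : ℂ) • ((2 : ℂ) • f) := by
    rw [smul_smul]; norm_num
  rw [h5]
  exact Subalgebra.smul_mem _ h4 _

end JMaux3
end
namespace JMaux4

open MonoidAlgebra Equiv MvPolynomial Finset JMaux JMaux2 JMaux3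

noncomputable section

variable {n : ℕ}

local notation "og" => MonoidAlgebra.of ℂ (Equiv.Perm (Fin n))

variable (u v : Fin n)

lemma hSS : og (Equiv.swap u v) * og (Equiv.swap u v) = 1 := by
  rw [← map_mul, Equiv.swap_mul_self, map_one]

variable (huv : u < v) (hcover : ∀ w : Fin n, w < v ↔ w < u ∨ w = u)

include huv hcover

lemma hlt {k : Fin n} (hku : k ≠ u) (hkv : k ≠ v) : u < k ↔ v < k := by
  constructor
  · intro h
    have h1 : ¬ k < v := by
      rw [hcover]
      push_neg
      exact ⟨h.le, hku⟩
    exact lt_of_le_of_ne (le_of_not_gt h1) (Ne.symm hkv)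
  · exact fun h => huv.trans h

lemma tswap_lt {k : Fin n} (hku : k ≠ u) (hkv : k ≠ v) (a : Fin n) :
    Equiv.swap u v a < k ↔ a < k := by
  rcases eq_or_ne a u with rfl | h1
  · rw [Equiv.swap_apply_left]
    exact ((hlt _ _ huv hcover hku hkv).symm)
  rcases eq_or_ne a v with rfl | h2
  · rw [Equiv.swap_apply_right]
    exact (hlt _ _ huv hcover hku hkv)
  · rw [Equiv.swap_apply_of_ne_of_ne h1 h2]

lemma hcomm_k {k : Fin n} (hku : k ≠ u) (hkv : k ≠ v) :
    og (Equiv.swap u v) * jm n k = jm n k * og (Equiv.swap u v) := by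
  unfold jm
  rw [Finset.mul_sum, Finset.sum_mul]
  refine Finset.sum_equiv (Equiv.swap u v) (fun a => ?_) (fun a ha => ?_)
  · simp only [Finset.mem_filter, Finset.mem_univ, true_and]
    exact (tswap_lt u v huv hcover hku hkv a).symm
  · rw [← map_mul, ← map_mul, swap_mul_swap_eq,
      Equiv.swap_apply_of_ne_of_ne hku hkv, map_mul]

lemma hfilter : Finset.univ.filter (fun a => a < v) =
    insert u (Finset.univ.filter (fun a => a < u)) := by
  ext a
  simp only [Finset.mem_filter, Finset.mem_univ, true_and, Finset.mem_insert]
  rw [hcover a, or_comm]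

lemma lt_u_ne {a : Fin n} (ha : a < u) : a ≠ u ∧ a ≠ v :=
  ⟨ha.ne, (ha.trans huv).ne⟩

lemma jm_v_sub : jm n v - og (Equiv.swap u v) =
    ∑ a ∈ Finset.univ.filter (fun a => a < u), og (Equiv.swap a v) := by
  unfold jm
  rw [hfilter u v huv hcover, Finset.sum_insert (by simp), add_sub_cancel_left]

lemma key1 : og (Equiv.swap u v) * jm n u = jm n v * og (Equiv.swap u v) - 1 := by
  have step : og (Equiv.swap u v) * jm n u =
      (jm n v - og (Equiv.swap u v)) * og (Equiv.swap u v) := by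
    rw [jm_v_sub u v huv hcover, Finset.sum_mul]
    conv_lhs => rw [show jm n u = ∑ k ∈ Finset.univ.filter (fun k => k < u),
      og (Equiv.swap k u) from rfl]
    rw [Finset.mul_sum]
    refine Finset.sum_congr rfl fun a ha => ?_
    simp only [Finset.mem_filter, Finset.mem_univ, true_and] at ha
    obtain ⟨h1, h2⟩ := lt_u_ne u v huv hcover ha
    rw [← map_mul, ← map_mul, swap_mul_swap_eq,
      Equiv.swap_apply_of_ne_of_ne h1 h2, Equiv.swap_apply_left]
  rw [step, sub_mul, hSS u v]

lemma key2 : og (Equiv.swap u v) * jm n v = jm n u * og (Equiv.swap u v) + 1 := by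
  conv_lhs => rw [show jm n v = ∑ k ∈ Finset.univ.filter (fun k => k < v),
    og (Equiv.swap k v) from rfl]
  rw [Finset.mul_sum, hfilter u v huv hcover, Finset.sum_insert (by simp)]
  have h1 : og (Equiv.swap u v) * og (Equiv.swap u v) = 1 := hSS u v
  rw [h1]
  have h2 : ∑ a ∈ Finset.univ.filter (fun a => a < u),
      og (Equiv.swap u v) * og (Equiv.swap a v) = jm n u * og (Equiv.swap u v) := by
    unfold jm
    rw [Finset.sum_mul]
    refine Finset.sum_congr rfl fun a ha => ?_
    simp only [Finset.mem_filter, Finset.mem_univ, true_and] at ha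
    obtain ⟨hh1, hh2⟩ := lt_u_ne u v huv hcover ha
    rw [← map_mul, ← map_mul, swap_mul_swap_eq,
      Equiv.swap_apply_of_ne_of_ne hh1 hh2, Equiv.swap_apply_right]
  rw [h2, add_comm]

end

end JMaux4
namespace JMaux5

open MonoidAlgebra Equiv MvPolynomial Finset JMaux JMaux2 JMaux3 JMaux4

noncomputable section

variable {n : ℕ}

local notation "og" => MonoidAlgebra.of ℂ (Equiv.Perm (Fin n))

lemma swap_comm_evalJM (u v : Fin n) (huv : u < v)
    (hcover : ∀ w : Fin n, w < v ↔ w < u ∨ w = u)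
    (f : MvPolynomial (Fin n) ℂ) (hsym : rename (Equiv.swap u v) f = f) :
    og (Equiv.swap u v) * evalJM n f = evalJM n f * og (Equiv.swap u v) := by
  set S := og (Equiv.swap u v) with hSdef
  have hss : S * S = 1 := hSS u v
  have hJ : ∀ i j, Commute (jm n i) (jm n j) := jm_commute
  set L : Fin n → MonoidAlgebra ℂ (Equiv.Perm (Fin n)) :=
    fun k => if k = u then jm n v - S else if k = v then jm n u + S else jm n k with hLdef
  have k1 : S * jm n u = jm n v * S - 1 := key1 u v huv hcover
  have k2 : S * jm n v = jm n u * S + 1 := key2 u v huv hcover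
  have F1 : ∀ k, k ≠ u → k ≠ v → Commute S (jm n k) :=
    fun k h1 h2 => hcomm_k u v huv hcover h1 h2
  have Lu : L u = jm n v - S := by simp [hLdef]
  have Lv : L v = jm n u + S := by simp [hLdef, huv.ne']
  have Lo : ∀ k, k ≠ u → k ≠ v → L k = jm n k := by
    intro k h1 h2; simp [hLdef, h1, h2]
  have cross : (jm n v - S) * (jm n u + S) = jm n u * jm n v := by
    rw [sub_mul, mul_add, mul_add, k1, hss, (hJ v u).eq]
    abel
  have cross' : (jm n u + S) * (jm n v - S) = jm n u * jm n v := by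
    rw [add_mul, mul_sub, mul_sub, k2, hss]
    abel
  have hL : ∀ i j, Commute (L i) (L j) := by
    have base : ∀ k, k ≠ u → k ≠ v → ∀ j, Commute (jm n k) (L j) := by
      intro k hk1 hk2 j
      rcases eq_or_ne j u with rfl | hju
      · rw [Lu]
        exact (hJ k v).sub_right (F1 k hk1 hk2).symm
      rcases eq_or_ne j v with rfl | hjv
      · rw [Lv]
        exact (hJ k u).add_right (F1 k hk1 hk2).symm
      · rw [Lo j hju hjv]; exact hJ k j
    intro i j
    by_cases hiu : i = u
    · by_cases hju : j = u
      · rw [hiu, hju]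
      by_cases hjv : j = v
      · rw [hiu, hjv, Lu, Lv]; exact cross.trans cross'.symm
      · rw [hiu, Lo j hju hjv]; exact ((base j hju hjv) u).symm
    by_cases hiv : i = v
    · by_cases hju : j = u
      · rw [hiv, hju, Lu, Lv]; exact cross'.trans cross.symm
      by_cases hjv : j = v
      · rw [hiv, hjv]
      · rw [hiv, Lo j hju hjv]; exact ((base j hju hjv) v).symm
    · rw [Lo i hiu hiv]; exact base i hiu hiv j
  have hΦ : (conjA (R := ℂ) S S hss hss).comp (evFam (jm n) hJ) = evFam L hL := by
    apply MvPolynomial.algHom_ext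
    intro k
    rw [AlgHom.comp_apply, evFam_X, evFam_X]
    show S * jm n k * S = L k
    rcases eq_or_ne k u with rfl | h1
    · rw [Lu, k1, sub_mul, mul_assoc, hss, mul_one, one_mul]
    rcases eq_or_ne k v with rfl | h2
    · rw [Lv, k2, add_mul, mul_assoc, hss, mul_one, one_mul]
    · rw [Lo k h1 h2, (F1 k h1 h2).eq, mul_assoc, hss, mul_one]
  have hmem : f ∈ Algebra.adjoin ℂ (Sgen u v) := mem_adjoin_of_symm u v huv.ne f hsym
  have hagree : evFam L hL f = evFam (jm n) hJ f := by
    have hle : Algebra.adjoin ℂ (Sgen u v) ≤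
        AlgHom.equalizer (evFam L hL) (evFam (jm n) hJ) := by
      rw [Algebra.adjoin_le_iff]
      rintro p (⟨k, hk1, hk2, rfl⟩ | rfl | rfl) <;>
        simp only [SetLike.mem_coe, AlgHom.mem_equalizer]
      · rw [evFam_X, evFam_X, Lo k hk1 hk2]
      · rw [map_add, map_add, evFam_X, evFam_X, evFam_X, evFam_X, Lu, Lv]; abel
      · rw [map_mul, map_mul, evFam_X, evFam_X, evFam_X, evFam_X, Lu, Lv, cross]
    exact hle hmem
  have hEv : evalJM n f = evFam (jm n) hJ f := (evFam_eq (jm n) hJ f).symm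
  have final : S * evalJM n f * S = evalJM n f := by
    rw [hEv]
    have hc := DFunLike.congr_fun hΦ f
    rw [AlgHom.comp_apply] at hc
    calc S * evFam (jm n) hJ f * S = conjA (R := ℂ) S S hss hss (evFam (jm n) hJ f) := rfl
      _ = evFam L hL f := hc
      _ = evFam (jm n) hJ f := hagree
  calc S * evalJM n f = S * evalJM n f * (S * S) := by rw [hss, mul_one]
    _ = (S * evalJM n f * S) * S := by rw [mul_assoc, mul_assoc, mul_assoc]
    _ = evalJM n f * S := by rw [final]

end

end JMaux5

/-- For every symmetric polynomial `f` in `n` variables, `f(J_1,…,J_n)` is central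
in the group algebra. -/
theorem evalJM_mem_center (n : ℕ) (hn : 1 ≤ n) (f : MvPolynomial (Fin n) ℂ)
    (hf : f.IsSymmetric) :
    evalJM n f ∈ Subalgebra.center ℂ (MonoidAlgebra ℂ (Equiv.Perm (Fin n))) := by
  obtain ⟨m, rfl⟩ : ∃ m, n = m + 1 := ⟨n - 1, (Nat.succ_pred_eq_of_pos hn).symm⟩
  rw [Subalgebra.mem_center_iff]
  intro b
  induction b using MonoidAlgebra.induction_on with
  | of g =>
    have hg : g ∈ Submonoid.closure
        (Set.range fun i : Fin m => Equiv.swap i.castSucc i.succ) := by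
      rw [Equiv.Perm.mclosure_swap_castSucc_succ]
      trivial
    induction hg using Submonoid.closure_induction with
    | mem x hx =>
      obtain ⟨i, rfl⟩ := hx
      have hcover : ∀ w : Fin (m + 1),
          w < i.succ ↔ w < i.castSucc ∨ w = i.castSucc := by
        intro w
        simp only [Fin.lt_def, Fin.ext_iff, Fin.val_succ, Fin.coe_castSucc]
        omega
      exact JMaux5.swap_comm_evalJM i.castSucc i.succ (Fin.castSucc_lt_succ (i := i)) hcover f
        (hf (Equiv.swap i.castSucc i.succ))
    | one => rw [show (MonoidAlgebra.of ℂ (Equiv.Perm (Fin (m+1)))) 1 = 1 from map_one _, one_mul, mul_one]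
    | mul a b ha hb hA hB =>
      rw [map_mul, mul_assoc, hB, ← mul_assoc, hA, mul_assoc]
  | add p q hp hq => rw [add_mul, mul_add, hp, hq]
  | smul c p hp => rw [smul_mul_assoc, mul_smul_comm, hp]
end

section
/- For every complex number d, the product ∏_{i=1}^n (d·1 + J_i) in the group algebra A equals Σ_{σ ∈ S_n} d^{cycles(σ)} σ. -/
open Equiv Equiv.Perm Finset

/-- Merging a fixed point into a cycle via a transposition yields a cycle. -/
lemma isCycle_mul_swap' {α : Type*} [DecidableEq α] [Fintype α] {c : Equiv.Perm α} {a b : α}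
    (hc : c.IsCycle) (ha : c a ≠ a) (hb : c b = b) : (c * Equiv.swap a b).IsCycle := by
  have hab : a ≠ b := fun h => ha (by rw [h, hb])
  have hpow : ∀ j : ℕ, (c ^ j) b = b := by
    intro j; induction j with
    | zero => rfl
    | succ j ihj => rw [pow_succ, Equiv.Perm.mul_apply, hb, ihj]
  have hca_ne_b : c a ≠ b := fun h => hab (c.injective (h.trans hb.symm))
  have hτb : (c * Equiv.swap a b) b = c a := by
    rw [Equiv.Perm.mul_apply, Equiv.swap_apply_right]
  have hτa : (c * Equiv.swap a b) a = b := by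
    rw [Equiv.Perm.mul_apply, Equiv.swap_apply_left, hb]
  have aux : ∀ j : ℕ, (∀ i, 0 < i → i ≤ j → (c ^ i) a ≠ a) →
      ((c * Equiv.swap a b) ^ (j + 1)) b = (c ^ (j + 1)) a := by
    intro j
    induction j with
    | zero => intro _; simpa using hτb
    | succ j ihj =>
      intro hcond
      have h1 : ((c * Equiv.swap a b) ^ (j + 1)) b = (c ^ (j + 1)) a :=
        ihj fun i hi hij => hcond i hi (hij.trans (Nat.le_succ _))
      have hy_ne_a : (c ^ (j + 1)) a ≠ a := hcond (j + 1) (Nat.succ_pos _) le_rfl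
      have hy_ne_b : (c ^ (j + 1)) a ≠ b := fun h =>
        hab ((c ^ (j + 1)).injective (h.trans (hpow (j + 1)).symm))
      rw [pow_succ', Equiv.Perm.mul_apply, h1, Equiv.Perm.mul_apply,
        Equiv.swap_apply_of_ne_of_ne hy_ne_a hy_ne_b, ← Equiv.Perm.mul_apply, ← pow_succ']
  refine ⟨b, by rw [hτb]; exact fun h => hca_ne_b h, ?_⟩
  intro y hy
  by_cases hyb : y = b
  · subst hyb; exact Equiv.Perm.SameCycle.refl _ _
  by_cases hya : y = a
  · subst hya
    refine ⟨-1, ?_⟩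
    simp only [zpow_neg, zpow_one]
    rw [Equiv.Perm.inv_eq_iff_eq]
    exact hτa.symm
  · have hcy : c y ≠ y := by
      rwa [Equiv.Perm.mul_apply, Equiv.swap_apply_of_ne_of_ne hya hyb] at hy
    obtain ⟨x0, hx0, hall⟩ := hc
    have h1 : c.SameCycle a y := (hall ha).symm.trans (hall hcy)
    obtain ⟨i, _, hi⟩ := h1.exists_pow_eq'
    have hi0 : i ≠ 0 := by rintro rfl; exact hya (by simpa using hi.symm)
    have hP : ∃ j, (c ^ (j + 1)) a = y :=
      ⟨i - 1, by rwa [Nat.sub_add_cancel (Nat.pos_of_ne_zero hi0)]⟩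
    have hJspec : (c ^ (Nat.find hP + 1)) a = y := Nat.find_spec hP
    have hcond : ∀ i', 0 < i' → i' ≤ Nat.find hP → (c ^ i') a ≠ a := by
      intro i' h0 hle heq
      have hsum : Nat.find hP + 1 = (Nat.find hP - i' + 1) + i' := by omega
      have : (c ^ (Nat.find hP - i' + 1)) a = y := by
        rw [hsum, pow_add, Equiv.Perm.mul_apply, heq] at hJspec
        exact hJspec
      exact Nat.find_min hP (by omega) this
    exact ⟨((Nat.find hP + 1 : ℕ) : ℤ), by rw [zpow_natCast, aux _ hcond]; exact hJspec⟩

lemma card_cycleType_mul_swap {α : Type*} [DecidableEq α] [Fintype α] (σ : Equiv.Perm α)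
    (a b : α) (hab : a ≠ b) (hb : σ b = b) :
    Multiset.card (σ * Equiv.swap a b).cycleType
      = Multiset.card σ.cycleType + (if σ a = a then 1 else 0) := by
  by_cases ha : σ a = a
  · have hd : σ.Disjoint (Equiv.swap a b) := by
      intro x
      by_cases hxa : x = a
      · exact Or.inl (hxa ▸ ha)
      by_cases hxb : x = b
      · exact Or.inl (hxb ▸ hb)
      · exact Or.inr (Equiv.swap_apply_of_ne_of_ne hxa hxb)
    rw [hd.cycleType_mul, if_pos ha, (Equiv.Perm.isCycle_swap hab).cycleType]
    simp
  · have hmem : σ.cycleOf a ∈ σ.cycleFactorsFinset :=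
      Equiv.Perm.cycleOf_mem_cycleFactorsFinset_iff.mpr (Equiv.Perm.mem_support.mpr ha)
    have hc : (σ.cycleOf a).IsCycle := Equiv.Perm.isCycle_cycleOf σ ha
    have hd : (σ * (σ.cycleOf a)⁻¹).Disjoint (σ.cycleOf a) :=
      Equiv.Perm.disjoint_mul_inv_of_mem_cycleFactorsFinset hmem
    have hσ : (σ * (σ.cycleOf a)⁻¹) * (σ.cycleOf a) = σ := inv_mul_cancel_right σ _
    have hca' : (σ.cycleOf a) a ≠ a := by rw [Equiv.Perm.cycleOf_apply_self]; exact ha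
    have hcb : (σ.cycleOf a) b = b := by
      rw [Equiv.Perm.cycleOf_apply]; split <;> simp [hb]
    have hρb : (σ * (σ.cycleOf a)⁻¹) b = b := by
      have hinv : (σ.cycleOf a)⁻¹ b = b := by
        rw [Equiv.Perm.inv_eq_iff_eq]; exact hcb.symm
      rw [Equiv.Perm.mul_apply, hinv, hb]
    have hdisj2 : (σ * (σ.cycleOf a)⁻¹).Disjoint (σ.cycleOf a * Equiv.swap a b) := by
      intro x
      rcases hd x with h | h
      · exact Or.inl h
      · by_cases hxa : x = a
        · exact (hca' (hxa ▸ h)).elim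
        by_cases hxb : x = b
        · exact Or.inl (hxb ▸ hρb)
        · exact Or.inr (by rw [Equiv.Perm.mul_apply, Equiv.swap_apply_of_ne_of_ne hxa hxb, h])
    have h1 : σ * Equiv.swap a b = (σ * (σ.cycleOf a)⁻¹) * (σ.cycleOf a * Equiv.swap a b) := by
      rw [← mul_assoc, hσ]
    have hct := hd.cycleType_mul
    rw [hσ] at hct
    rw [h1, hdisj2.cycleType_mul, hct, if_neg ha, hc.cycleType,
      (isCycle_mul_swap' hc hca' hcb).cycleType]
    simp

open Equiv Equiv.Perm Finset

/-- Orbit count of `σ` "below `m`": number of nontrivial cycles plus fixed points `< m`. -/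
def fixC {n : ℕ} (m : ℕ) (σ : Equiv.Perm (Fin n)) : ℕ :=
  Multiset.card σ.cycleType +
    (Finset.univ.filter fun x : Fin n => σ x = x ∧ (x : ℕ) < m).card

/-- Permutations fixing every point with index `≥ m`. -/
def TS (n m : ℕ) : Finset (Equiv.Perm (Fin n)) :=
  Finset.univ.filter fun σ => ∀ j : Fin n, m ≤ (j : ℕ) → σ j = j

lemma mem_TS {n m : ℕ} {σ : Equiv.Perm (Fin n)} :
    σ ∈ TS n m ↔ ∀ j : Fin n, m ≤ (j : ℕ) → σ j = j := by
  simp [TS]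

lemma fix_filter_mul_swap {n : ℕ} (σ : Equiv.Perm (Fin n)) (a b : Fin n) (hab : a < b)
    (hb : σ b = b) :
    (Finset.univ.filter fun x : Fin n => (σ * Equiv.swap a b) x = x ∧ (x : ℕ) < (b : ℕ) + 1)
      = (Finset.univ.filter fun x : Fin n => σ x = x ∧ (x : ℕ) < (b : ℕ)).erase a := by
  have hab' : a ≠ b := ne_of_lt hab
  have hσab : σ a ≠ b := fun h => hab' (σ.injective (h.trans hb.symm))
  ext x
  simp only [mem_filter, mem_univ, true_and, mem_erase]
  simp only [Equiv.Perm.mul_apply]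
  constructor
  · rintro ⟨h1, h2⟩
    by_cases hxa : x = a
    · subst hxa; rw [Equiv.swap_apply_left, hb] at h1; exact absurd h1.symm hab'
    by_cases hxb : x = b
    · subst hxb; rw [Equiv.swap_apply_right] at h1; exact absurd h1 hσab
    · rw [Equiv.swap_apply_of_ne_of_ne hxa hxb] at h1
      have hxb' : (x : ℕ) ≠ (b : ℕ) := fun h => hxb (Fin.ext h)
      exact ⟨hxa, h1, by omega⟩
  · rintro ⟨hxa, h1, h2⟩
    have hxb : x ≠ b := fun h => by subst h; exact lt_irrefl _ h2
    rw [Equiv.swap_apply_of_ne_of_ne hxa hxb]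
    exact ⟨h1, by omega⟩

lemma fixC_mul_swap {n : ℕ} (σ : Equiv.Perm (Fin n)) (a b : Fin n) (hab : a < b)
    (hb : σ b = b) : fixC ((b : ℕ) + 1) (σ * Equiv.swap a b) = fixC (b : ℕ) σ := by
  unfold fixC
  rw [card_cycleType_mul_swap σ a b (ne_of_lt hab) hb, fix_filter_mul_swap σ a b hab hb]
  by_cases ha : σ a = a
  · have hmem : a ∈ Finset.univ.filter fun x : Fin n => σ x = x ∧ (x : ℕ) < (b : ℕ) := by
      simp only [mem_filter, mem_univ, true_and]
      exact ⟨ha, hab⟩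
    have hpos : 1 ≤ (Finset.univ.filter fun x : Fin n => σ x = x ∧ (x : ℕ) < (b : ℕ)).card :=
      Finset.card_pos.mpr ⟨a, hmem⟩
    rw [Finset.card_erase_of_mem hmem, if_pos ha]
    omega
  · have hmem : a ∉ Finset.univ.filter fun x : Fin n => σ x = x ∧ (x : ℕ) < (b : ℕ) := by
      simp [ha]
    rw [Finset.erase_eq_of_notMem hmem, if_neg ha]
    omega

lemma fixC_succ {n m : ℕ} (σ : Equiv.Perm (Fin n)) (b : Fin n) (hbm : (b : ℕ) = m)
    (hσb : σ b = b) : fixC (m + 1) σ = fixC m σ + 1 := by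
  unfold fixC
  have hins : (Finset.univ.filter fun x : Fin n => σ x = x ∧ (x : ℕ) < m + 1)
      = insert b (Finset.univ.filter fun x : Fin n => σ x = x ∧ (x : ℕ) < m) := by
    ext x
    simp only [mem_filter, mem_univ, true_and, mem_insert]
    constructor
    · rintro ⟨h1, h2⟩
      rcases Nat.lt_succ_iff_lt_or_eq.mp h2 with h | h
      · exact Or.inr ⟨h1, h⟩
      · exact Or.inl (Fin.ext (by omega))
    · rintro (rfl | ⟨h1, h2⟩)
      · exact ⟨hσb, by omega⟩
      · exact ⟨h1, by omega⟩
  rw [hins, Finset.card_insert_of_notMem (by simp [hbm])]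
  omega

/-- For every complex number `d`, `∏_{i=1}^n (d·1 + J_i) = Σ_σ d^{cycles(σ)} σ`
(the JM elements commute, so the order of the factors is immaterial; we multiply
them in increasing order of the index). -/
theorem prod_d_add_jm_eq (n : ℕ) (hn : 1 ≤ n) (d : ℂ) :
    ((List.finRange n).map fun i =>
        d • (1 : MonoidAlgebra ℂ (Equiv.Perm (Fin n))) + jm n i).prod =
      ∑ σ : Equiv.Perm (Fin n), MonoidAlgebra.single σ (d ^ cycles σ) := by
  classical
  have key : ∀ m, m ≤ n →
      (((List.finRange n).map fun i =>
          d • (1 : MonoidAlgebra ℂ (Equiv.Perm (Fin n))) + jm n i).take m).prod =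
        ∑ σ ∈ TS n m, MonoidAlgebra.single σ (d ^ fixC m σ) := by
    intro m
    induction m with
    | zero =>
      intro _
      rw [List.take_zero, List.prod_nil]
      have hset : TS n 0 = {1} := by
        ext σ
        simp only [mem_TS, Finset.mem_singleton]
        constructor
        · intro h
          exact Equiv.ext fun x => h x (Nat.zero_le _)
        · rintro rfl j _; rfl
      rw [hset, Finset.sum_singleton]
      simp [fixC, Equiv.Perm.cycleType_one, MonoidAlgebra.one_def]
    | succ m ih =>
      intro hm1
      have hmn : m < n := hm1
      have ihm := ih hmn.le
      set b : Fin n := ⟨m, hmn⟩ with hb_def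
      have hbv : (b : ℕ) = m := rfl
      have hlen : m < (((List.finRange n).map fun i =>
          d • (1 : MonoidAlgebra ℂ (Equiv.Perm (Fin n))) + jm n i)).length := by
        simpa using hmn
      rw [List.prod_take_succ _ m hlen, ihm]
      have hget : (((List.finRange n).map fun i =>
          d • (1 : MonoidAlgebra ℂ (Equiv.Perm (Fin n))) + jm n i))[m]'hlen
          = d • 1 + jm n b := by
        simp [hb_def]
      rw [hget, mul_add]
      have hσball : ∀ σ ∈ TS n m, σ b = b := fun σ hσ =>
        (mem_TS.mp hσ) b (le_of_eq hbv.symm)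
      have part1 : (∑ σ ∈ TS n m, MonoidAlgebra.single σ (d ^ fixC m σ)) *
          (d • (1 : MonoidAlgebra ℂ (Equiv.Perm (Fin n))))
          = ∑ σ ∈ TS n m, MonoidAlgebra.single σ (d ^ fixC (m + 1) σ) := by
        rw [Finset.sum_mul]
        refine Finset.sum_congr rfl fun σ hσ => ?_
        rw [mul_smul_comm, mul_one, MonoidAlgebra.smul_single',
          fixC_succ σ b hbv (hσball σ hσ), ← pow_succ']
      have part2 : (∑ σ ∈ TS n m, MonoidAlgebra.single σ (d ^ fixC m σ)) * jm n b
          = ∑ τ ∈ (TS n (m + 1)).filter (fun τ => ¬ τ b = b),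
              MonoidAlgebra.single τ (d ^ fixC (m + 1) τ) := by
        rw [jm, Finset.mul_sum]
        have hstep : ∀ k ∈ Finset.univ.filter (fun k : Fin n => k < b),
            (∑ σ ∈ TS n m, MonoidAlgebra.single σ (d ^ fixC m σ)) *
              MonoidAlgebra.of ℂ (Equiv.Perm (Fin n)) (Equiv.swap k b)
            = ∑ σ ∈ TS n m, MonoidAlgebra.single (σ * Equiv.swap k b) (d ^ fixC m σ) := by
          intro k _
          rw [Finset.sum_mul]
          refine Finset.sum_congr rfl fun σ _ => ?_
          rw [MonoidAlgebra.of_apply, MonoidAlgebra.single_mul_single, mul_one]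
        rw [Finset.sum_congr rfl hstep, ← Finset.sum_product']
        refine Finset.sum_nbij'
          (i := fun p : Fin n × Equiv.Perm (Fin n) => p.2 * Equiv.swap p.1 b)
          (j := fun τ => (τ⁻¹ b, τ * Equiv.swap (τ⁻¹ b) b)) ?_ ?_ ?_ ?_ ?_
        · rintro ⟨k, σ⟩ hp
          rw [Finset.mem_product] at hp
          obtain ⟨hk, hσ⟩ := hp
          have hkv : (k : ℕ) < m := by
            have := (Finset.mem_filter.mp hk).2
            simpa [Fin.lt_def, hbv] using this
          have hσm := mem_TS.mp hσ
          have hσbb : σ b = b := hσball σ hσ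
          rw [Finset.mem_filter]
          refine ⟨?_, ?_⟩
          · rw [mem_TS]
            intro j hj
            have hjk : j ≠ k := fun h => by rw [h] at hj; omega
            have hjb : j ≠ b := fun h => by rw [h] at hj; rw [hbv] at hj; omega
            rw [Equiv.Perm.mul_apply, Equiv.swap_apply_of_ne_of_ne hjk hjb]
            exact hσm j (by omega)
          · intro h
            rw [Equiv.Perm.mul_apply, Equiv.swap_apply_right] at h
            have : k = b := σ.injective (h.trans hσbb.symm)
            rw [this] at hkv
            omega
        · intro τ hτ
          rw [Finset.mem_filter] at hτ
          obtain ⟨hτ1, hτb⟩ := hτ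
          have hτm := mem_TS.mp hτ1
          have hkb2 : τ (τ⁻¹ b) = b := Equiv.apply_symm_apply τ b
          have hkne : τ⁻¹ b ≠ b := fun h => hτb ((congrArg τ h).symm.trans hkb2)
          have hkv : ((τ⁻¹ b : Fin n) : ℕ) < m := by
            by_contra h'
            push_neg at h'
            rcases eq_or_lt_of_le h' with h | h
            · exact hkne (Fin.ext (by omega))
            · have := hτm (τ⁻¹ b) (by omega)
              rw [hkb2] at this
              exact hkne this.symm
          rw [Finset.mem_product]
          constructor
          · rw [Finset.mem_filter]
            exact ⟨Finset.mem_univ _, by rw [Fin.lt_def, hbv]; exact hkv⟩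
          · rw [mem_TS]
            intro j hj
            rcases eq_or_lt_of_le hj with h | h
            · have hjb : j = b := Fin.ext (by omega)
              rw [hjb, Equiv.Perm.mul_apply, Equiv.swap_apply_right, hkb2]
            · have hjk : j ≠ τ⁻¹ b := fun hh => by rw [hh] at h; omega
              have hjb : j ≠ b := fun hh => by rw [hh, hbv] at h; omega
              rw [Equiv.Perm.mul_apply, Equiv.swap_apply_of_ne_of_ne hjk hjb]
              exact hτm j (by omega)
        · rintro ⟨k, σ⟩ hp
          rw [Finset.mem_product] at hp
          obtain ⟨hk, hσ⟩ := hp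
          have hσbb : σ b = b := hσball σ hσ
          have hinvb : σ⁻¹ b = b := by rw [Equiv.Perm.inv_eq_iff_eq]; exact hσbb.symm
          have e1 : (σ * Equiv.swap k b)⁻¹ b = k := by
            rw [mul_inv_rev, Equiv.Perm.mul_apply, Equiv.swap_inv, hinvb,
              Equiv.swap_apply_right]
          simp only [e1, Prod.mk.injEq]
          exact ⟨trivial, by rw [mul_assoc, Equiv.swap_mul_self, mul_one]⟩
        · intro τ _
          show (τ * Equiv.swap (τ⁻¹ b) b) * Equiv.swap (τ⁻¹ b) b = τ
          rw [mul_assoc, Equiv.swap_mul_self, mul_one]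
        · rintro ⟨k, σ⟩ hp
          rw [Finset.mem_product] at hp
          obtain ⟨hk, hσ⟩ := hp
          have hkb : k < b := (Finset.mem_filter.mp hk).2
          have hσbb : σ b = b := hσball σ hσ
          have hfx := fixC_mul_swap σ k b hkb hσbb
          rw [hbv] at hfx
          show MonoidAlgebra.single (σ * Equiv.swap k b) (d ^ fixC m σ)
            = MonoidAlgebra.single (σ * Equiv.swap k b) (d ^ fixC (m + 1) (σ * Equiv.swap k b))
          rw [hfx]
      rw [part1, part2,
        ← Finset.sum_filter_add_sum_filter_not (TS n (m + 1)) (fun τ => τ b = b)]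
      congr 1
      have hTSeq : (TS n (m + 1)).filter (fun τ => τ b = b) = TS n m := by
        ext τ
        simp only [Finset.mem_filter, mem_TS]
        constructor
        · rintro ⟨h1, h2⟩ j hj
          rcases eq_or_lt_of_le hj with h | h
          · have hjb : j = b := Fin.ext (by omega)
            rw [hjb]; exact h2
          · exact h1 j h
        · intro h
          exact ⟨fun j hj => h j (by omega), h b (le_of_eq hbv.symm)⟩
      rw [hTSeq]
  have h := key n le_rfl
  rw [List.take_of_length_le (by simp)] at h
  rw [h]
  have hTSn : TS n n = Finset.univ := by
    ext σ
    simp only [mem_TS, Finset.mem_univ, iff_true]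
    intro j hj
    exact absurd j.isLt (not_lt.mpr hj)
  rw [hTSn]
  refine Finset.sum_congr rfl fun σ _ => ?_
  have hfix : (Finset.univ.filter fun x : Fin n => σ x = x ∧ (x : ℕ) < n)
      = Finset.univ.filter fun x : Fin n => σ x = x := by
    ext x
    simp only [Finset.mem_filter, Finset.mem_univ, true_and, and_iff_left_iff_imp]
    intro _
    exact x.isLt
  simp only [fixC, cycles, hfix]
end

section
/- (Collins) For every integer d ≥ n, the element Σ_{σ ∈ S_n} d^{cycles(σ)} σ (equivalently, the product ∏_{i=1}^n (d·1 + J_i)) is a unit in the group algebra A. -/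
namespace CollinsAux

open Equiv Equiv.Perm Finset

/-! ### Cycle counting under multiplication by a transposition -/

theorem isCycle_mul_swap {α : Type*} [DecidableEq α] [Fintype α] {c : Perm α} (hc : c.IsCycle)
    {a k : α} (ha : c a = a) (hk : c k ≠ k) : IsCycle (c * Equiv.swap k a) := by
  have hak : a ≠ k := fun h => hk (h ▸ ha)
  set g := c * Equiv.swap k a with hg
  have hga : g a = c k := by simp [hg, Perm.mul_apply, Equiv.swap_apply_right]
  have hgk : g k = a := by simp [hg, Perm.mul_apply, Equiv.swap_apply_left, ha]
  have hcka : c k ≠ a := fun h => hk (c.injective (by rw [h, ha]))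
  have key : ∀ j : ℕ, g.SameCycle a ((c ^ j) k) := by
    intro j
    induction j with
    | zero => exact (Perm.SameCycle.symm ⟨1, by simpa using hgk⟩)
    | succ j ih =>
      by_cases h : (c ^ j) k = k
      · have : (c ^ (j+1)) k = g a := by rw [pow_succ', Perm.mul_apply, h, hga]
        rw [this]
        exact ⟨1, by simp⟩
      · have hne : c ((c ^ j) k) ≠ (c ^ j) k := by
          intro hcon
          apply hk
          apply (c ^ j).injective
          rw [← Perm.mul_apply, ← pow_succ, pow_succ', Perm.mul_apply, hcon]
        have hna : (c ^ j) k ≠ a := fun h' => hne (by rw [h', ha])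
        have : g ((c ^ j) k) = (c ^ (j+1)) k := by
          rw [hg, Perm.mul_apply, Equiv.swap_apply_of_ne_of_ne h hna, pow_succ', Perm.mul_apply]
        exact ih.trans ⟨1, by simpa using this⟩
  refine ⟨a, by rw [hga]; exact hcka, fun y hy => ?_⟩
  by_cases hya : y = a
  · exact hya ▸ Perm.SameCycle.refl g a
  · have hcy : c y ≠ y := by
      intro h
      by_cases hyk : y = k
      · exact hk (hyk ▸ h)
      · exact hy (by rw [hg, Perm.mul_apply, Equiv.swap_apply_of_ne_of_ne hyk hya, h])
    obtain ⟨j, _, hj⟩ := (hc.sameCycle hk hcy).exists_pow_eq'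
    exact (key j).trans (hj ▸ Perm.SameCycle.refl g y)

theorem cycles_mul_swap {n : ℕ} (σ : Equiv.Perm (Fin n)) {a k : Fin n}
    (ha : σ a = a) (hk : k ≠ a) :
    cycles (σ * Equiv.swap k a) + 1 = cycles σ := by
  set τ := σ * Equiv.swap k a with hτdef
  have hτk : τ k = a := by simp [hτdef, Perm.mul_apply, ha]
  have hτa : τ a = σ k := by simp [hτdef, Perm.mul_apply]
  have hτa_ne : τ a ≠ a := by
    rw [hτa]; intro h; exact hk (σ.injective (h.trans ha.symm))
  have hτother : ∀ x, x ≠ k → x ≠ a → τ x = σ x := fun x h1 h2 => by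
    simp [hτdef, Perm.mul_apply, Equiv.swap_apply_of_ne_of_ne h1 h2]
  have hfix : (univ.filter fun x => τ x = x)
      = ((univ.filter fun x => σ x = x).erase k).erase a := by
    ext x
    simp only [mem_filter, mem_univ, true_and, Finset.mem_erase]
    constructor
    · intro hx
      have hxa : x ≠ a := fun h => hτa_ne (by rw [← h]; exact hx)
      have hxk : x ≠ k := fun h => (hk (by rw [h] at hx; rw [← hτk, hx]))
      exact ⟨hxa, hxk, by rw [← hτother x hxk hxa]; exact hx⟩
    · rintro ⟨hxa, hxk, hx⟩
      rw [hτother x hxk hxa]; exact hx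
  have hamem : a ∈ univ.filter fun x => σ x = x := by simp [ha]
  unfold cycles
  by_cases hks : σ k = k
  · -- `σ` and the swap are disjoint
    have hdisj : Perm.Disjoint σ (Equiv.swap k a) := by
      intro x
      by_cases h1 : x = k
      · left; rw [h1]; exact hks
      · by_cases h2 : x = a
        · left; rw [h2]; exact ha
        · right; exact Equiv.swap_apply_of_ne_of_ne h1 h2
    have hct : τ.cycleType = σ.cycleType + (Equiv.swap k a).cycleType :=
      Equiv.Perm.Disjoint.cycleType_mul hdisj
    have hcts : (Equiv.swap k a).cycleType = {2} := by
      rw [(isCycle_swap hk).cycleType, card_support_swap hk]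
    have hkmem : k ∈ univ.filter fun x => σ x = x := by simp [hks]
    have hamem' : a ∈ (univ.filter fun x => σ x = x).erase k :=
      Finset.mem_erase.2 ⟨hk.symm, hamem⟩
    have hcard2 : 2 ≤ (univ.filter fun x => σ x = x).card := by
      have : ({k, a} : Finset (Fin n)) ⊆ univ.filter fun x => σ x = x := by
        intro x hx
        rcases Finset.mem_insert.1 hx with h | h
        · exact h ▸ hkmem
        · exact (Finset.mem_singleton.1 h) ▸ hamem
      calc 2 = ({k, a} : Finset (Fin n)).card := by
            rw [Finset.card_insert_of_notMem (by simpa using hk), Finset.card_singleton]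
      _ ≤ _ := Finset.card_le_card this
    rw [hct, hcts, hfix, Finset.card_erase_of_mem hamem', Finset.card_erase_of_mem hkmem]
    simp only [Multiset.card_add, Multiset.card_singleton]
    omega
  · -- the swap splices the fixed point `a` into the cycle of `k`
    have hσk : k ∈ σ.support := mem_support.2 hks
    set c := σ.cycleOf k with hcdef
    have hc_mem : c ∈ σ.cycleFactorsFinset := cycleOf_mem_cycleFactorsFinset_iff.2 hσk
    have hc_cycle : c.IsCycle := isCycle_cycleOf σ hks
    have hca : c a = a := by
      rw [hcdef, cycleOf_apply]; split_ifs <;> simp [ha]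
    have hck : c k ≠ k := by rw [hcdef, cycleOf_apply_self]; exact hks
    have hρc : σ * c⁻¹ * c = σ := inv_mul_cancel_right σ c
    have hdisj : Perm.Disjoint (σ * c⁻¹) c :=
      disjoint_mul_inv_of_mem_cycleFactorsFinset hc_mem
    have hc'a : c⁻¹ a = a := c.injective (by rw [← Perm.mul_apply, mul_inv_cancel, Perm.one_apply, hca])
    have hρa : (σ * c⁻¹) a = a := by rw [Perm.mul_apply, hc'a, ha]
    have hρk : (σ * c⁻¹) k = k := by
      rcases hdisj k with h | h
      · exact h
      · exact absurd h hck
    have hdisj' : Perm.Disjoint (σ * c⁻¹) (c * Equiv.swap k a) := by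
      intro x
      by_cases hx : (σ * c⁻¹) x = x
      · left; exact hx
      · right
        have hxk : x ≠ k := fun h => hx (h ▸ hρk)
        have hxa : x ≠ a := fun h => hx (h ▸ hρa)
        have hcx : c x = x := by
          rcases hdisj x with h | h
          · exact absurd h hx
          · exact h
        rw [Perm.mul_apply, Equiv.swap_apply_of_ne_of_ne hxk hxa, hcx]
    have hτeq : τ = (σ * c⁻¹) * (c * Equiv.swap k a) := by
      rw [hτdef, ← mul_assoc, hρc]
    have hct : τ.cycleType = (σ * c⁻¹).cycleType + (c * Equiv.swap k a).cycleType := by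
      rw [hτeq]; exact Equiv.Perm.Disjoint.cycleType_mul hdisj'
    have hρct : (σ * c⁻¹).cycleType = σ.cycleType - c.cycleType :=
      cycleType_mul_inv_mem_cycleFactorsFinset_eq_sub hc_mem
    have hle : c.cycleType ≤ σ.cycleType := cycleType_le_of_mem_cycleFactorsFinset hc_mem
    have hcard1 : Multiset.card c.cycleType = 1 := card_cycleType_eq_one.2 hc_cycle
    have hcard1' : Multiset.card (c * Equiv.swap k a).cycleType = 1 :=
      card_cycleType_eq_one.2 (isCycle_mul_swap hc_cycle hca hck)
    have hσpos : 0 < Multiset.card σ.cycleType :=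
      card_cycleType_pos.2 (fun h => hks (by rw [h]; rfl))
    have hknotfix : k ∉ univ.filter fun x => σ x = x := by simp [hks]
    have hfixcard : 1 ≤ (univ.filter fun x => σ x = x).card :=
      Finset.card_pos.2 ⟨a, hamem⟩
    rw [hct, hρct, hfix, Finset.erase_eq_of_notMem hknotfix,
      Finset.card_erase_of_mem hamem]
    rw [Multiset.card_add, Multiset.card_sub hle, hcard1, hcard1']
    omega

/-! ### The partial products of `d + J_i` -/

variable (n d : ℕ)

/-- The factor `d·1 + J_{i+1}`. -/
noncomputable abbrev F (i : Fin n) : MonoidAlgebra ℂ (Equiv.Perm (Fin n)) :=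
  MonoidAlgebra.single 1 (d : ℂ) +
    ∑ k ∈ Finset.univ.filter (fun k => k < i), MonoidAlgebra.single (Equiv.swap k i) 1

/-- The partial products `∏_{i<m} (d·1 + J_{i+1})`. -/
noncomputable def P : ℕ → MonoidAlgebra ℂ (Equiv.Perm (Fin n))
  | 0 => 1
  | (m + 1) => if h : m < n then P m * F n d ⟨m, h⟩ else P m

/-- Permutations fixing everything from position `m` on. -/
def T (m : ℕ) : Finset (Equiv.Perm (Fin n)) :=
  Finset.univ.filter fun σ => ∀ j : Fin n, m ≤ (j : ℕ) → σ j = j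

theorem mem_T_iff {m : ℕ} {σ : Equiv.Perm (Fin n)} :
    σ ∈ T n m ↔ ∀ j : Fin n, m ≤ (j : ℕ) → σ j = j := by
  simp [T]

theorem card_filter_lt {m : ℕ} (hm : m ≤ n) :
    (Finset.univ.filter fun j : Fin n => (j : ℕ) < m).card = m := by
  have h : (Finset.univ.filter fun j : Fin n => (j : ℕ) < m)
      = (Finset.univ : Finset (Fin m)).map (Fin.castLEEmb hm) := by
    ext j
    simp only [mem_filter, mem_univ, true_and, Finset.mem_map, Fin.castLEEmb_apply]
    constructor
    · intro hj; exact ⟨⟨(j : ℕ), hj⟩, by ext; simp⟩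
    · rintro ⟨i, rfl⟩; simpa using i.isLt
  rw [h, Finset.card_map, Finset.card_univ, Fintype.card_fin]

theorem fix_lower {m : ℕ} (hm : m ≤ n) {σ : Equiv.Perm (Fin n)}
    (hσ : ∀ j : Fin n, m ≤ (j : ℕ) → σ j = j) :
    n - m ≤ cycles σ := by
  have hsub : (Finset.univ.filter fun j : Fin n => m ≤ (j : ℕ))
      ⊆ Finset.univ.filter fun x => σ x = x := by
    intro j hj
    simp only [mem_filter, mem_univ, true_and] at hj ⊢
    exact hσ j hj
  have hcard := Finset.card_le_card hsub
  have hfc : (Finset.univ.filter fun j : Fin n => m ≤ (j : ℕ)).card = n - m := by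
    have := Finset.card_filter_add_card_filter_not
      (s := (Finset.univ : Finset (Fin n))) (p := fun j : Fin n => (j : ℕ) < m)
    simp only [not_lt] at this
    have h2 := card_filter_lt n hm
    rw [Finset.card_univ, Fintype.card_fin] at this
    omega
  unfold cycles
  omega

theorem T_zero : T n 0 = {1} := by
  ext σ
  simp only [mem_T_iff, Finset.mem_singleton]
  constructor
  · intro h; exact Equiv.Perm.ext fun j => h j (Nat.zero_le _)
  · rintro rfl j -; rfl

theorem cycles_one : cycles (1 : Equiv.Perm (Fin n)) = n := by
  unfold cycles
  simp [Equiv.Perm.cycleType_one]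

theorem T_filter (m : ℕ) (hm : m < n) :
    (T n (m + 1)).filter (fun τ => τ ⟨m, hm⟩ = ⟨m, hm⟩) = T n m := by
  have him : ((⟨m, hm⟩ : Fin n) : ℕ) = m := rfl
  ext σ
  simp only [Finset.mem_filter, mem_T_iff]
  constructor
  · rintro ⟨h1, h2⟩ j hj
    rcases Nat.lt_or_ge (j : ℕ) (m + 1) with h | h
    · have : j = (⟨m, hm⟩ : Fin n) := Fin.ext (by omega)
      rw [this]; exact h2
    · exact h1 j h
  · intro h
    exact ⟨fun j hj => h j (by omega), h _ (by omega)⟩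

theorem apply_lt {m : ℕ} {σ : Equiv.Perm (Fin n)}
    (hσ : ∀ j : Fin n, m ≤ (j : ℕ) → σ j = j) {k : Fin n} (hk : (k : ℕ) < m) :
    ((σ k : Fin n) : ℕ) < m := by
  by_contra h
  push_neg at h
  have h2 : σ (σ k) = σ k := hσ _ h
  have h3 : σ k = k := σ.injective h2
  rw [h3] at h
  omega

/-- The key identity (Jucys): the partial product `P m` is the sum of `d^{cycles σ - (n-m)}·σ`
over permutations fixing positions `≥ m`. -/
theorem P_eq (m : ℕ) (hm : m ≤ n) :
    P n d m = ∑ σ ∈ T n m, MonoidAlgebra.single σ ((d : ℂ) ^ (cycles σ - (n - m))) := by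
  induction m with
  | zero =>
    rw [T_zero]
    simp only [P, Finset.sum_singleton, cycles_one, Nat.sub_self, Nat.sub_zero, pow_zero]
    exact MonoidAlgebra.one_def
  | succ m ih =>
    have hm' : m < n := hm
    set i : Fin n := ⟨m, hm'⟩ with hidef
    have him : (i : ℕ) = m := rfl
    have hP : P n d (m + 1) = P n d m * F n d i := by
      rw [P, dif_pos hm']
    rw [hP, ih (le_of_lt hm')]
    rw [← Finset.sum_filter_add_sum_filter_not (T n (m + 1)) (fun τ => τ i = i)
      (fun τ => MonoidAlgebra.single τ ((d : ℂ) ^ (cycles τ - (n - (m + 1)))))]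
    rw [T_filter n m hm']
    rw [mul_add, Finset.sum_mul, Finset.sum_mul]
    congr 1
    · -- diagonal part
      apply Finset.sum_congr rfl
      intro σ hσ
      rw [mem_T_iff] at hσ
      rw [MonoidAlgebra.single_mul_single, mul_one]
      congr 1
      have h1 : n - m ≤ cycles σ := fix_lower n (le_of_lt hm') hσ
      rw [← pow_succ]
      congr 1
      omega
    · -- off-diagonal part
      have hstep : ∀ σ ∈ T n m,
          (MonoidAlgebra.single σ ((d : ℂ) ^ (cycles σ - (n - m))) *
            ∑ k ∈ Finset.univ.filter (fun k => k < i),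
              MonoidAlgebra.single (Equiv.swap k i) (1 : ℂ))
          = ∑ k ∈ Finset.univ.filter (fun k => k < i),
              MonoidAlgebra.single (σ * Equiv.swap k i)
                ((d : ℂ) ^ (cycles σ - (n - m))) := by
        intro σ hσ
        rw [Finset.mul_sum]
        apply Finset.sum_congr rfl
        intro k hk
        rw [MonoidAlgebra.single_mul_single, mul_one]
      rw [Finset.sum_congr rfl hstep, ← Finset.sum_product']
      refine Finset.sum_nbij' (fun p => p.1 * Equiv.swap p.2 i)
        (fun τ => (τ * Equiv.swap (τ⁻¹ i) i, τ⁻¹ i)) ?_ ?_ ?_ ?_ ?_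
      · -- maps into
        rintro ⟨σ, k⟩ hp
        rw [Finset.mem_product] at hp
        obtain ⟨hσ, hk⟩ := hp
        dsimp only at hσ hk ⊢
        rw [mem_T_iff] at hσ
        rw [Finset.mem_filter] at hk
        have hki : (k : ℕ) < m := by
          have := hk.2
          rw [Fin.lt_def] at this
          omega
        rw [Finset.mem_filter, mem_T_iff]
        constructor
        · intro j hj
          have hjk : j ≠ k := fun h => by rw [h] at hj; omega
          have hji : j ≠ i := fun h => by rw [h] at hj; omega
          rw [Perm.mul_apply, Equiv.swap_apply_of_ne_of_ne hjk hji]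
          exact hσ j (by omega)
        · intro hcon
          have heq : (σ * Equiv.swap k i) i = σ k := by
            rw [Perm.mul_apply, Equiv.swap_apply_right]
          rw [heq] at hcon
          have hlt := apply_lt n hσ hki
          rw [hcon] at hlt
          omega
      · -- reverse maps into
        intro τ hτ
        rw [Finset.mem_filter, mem_T_iff] at hτ
        obtain ⟨hτ1, hτ2⟩ := hτ
        set k := τ⁻¹ i with hkdef
        have hτk : τ k = i := Equiv.apply_symm_apply τ i
        have hki : k ≠ i := fun h => hτ2 (by rw [← h, hτk, h])
        have hkival : (k : ℕ) ≠ (i : ℕ) := fun h => hki (Fin.ext h)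
        have hkm : (k : ℕ) < m := by
          by_contra hcon
          push_neg at hcon
          rcases Nat.lt_or_ge (k : ℕ) (m + 1) with h | h
          · omega
          · have hkk := hτ1 k h
            rw [hτk] at hkk
            rw [← hkk] at h
            omega
        rw [Finset.mem_product, mem_T_iff, Finset.mem_filter]
        refine ⟨fun j hj => ?_, mem_univ _, ?_⟩
        · by_cases hji : j = i
          · rw [hji, Perm.mul_apply, Equiv.swap_apply_right, hτk]
          · have hjival : (j : ℕ) ≠ (i : ℕ) := fun h => hji (Fin.ext h)
            have hjm : m + 1 ≤ (j : ℕ) := by omega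
            have hjk : j ≠ k := fun h => by rw [h] at hjm; omega
            rw [Perm.mul_apply, Equiv.swap_apply_of_ne_of_ne hjk hji]
            exact hτ1 j hjm
        · exact Fin.lt_def.mpr (by omega : (k : ℕ) < (i : ℕ))
      · -- left inverse
        rintro ⟨σ, k⟩ hp
        rw [Finset.mem_product] at hp
        obtain ⟨hσ, hk⟩ := hp
        dsimp only at hσ hk ⊢
        rw [mem_T_iff] at hσ
        have hσi : σ i = i := hσ i (by omega)
        have h1 : (σ * Equiv.swap k i) k = i := by
          rw [Perm.mul_apply, Equiv.swap_apply_left, hσi]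
        have h2 : (σ * Equiv.swap k i)⁻¹ i = k :=
          Equiv.Perm.inv_eq_iff_eq.mpr h1.symm
        have h3 : (σ * Equiv.swap k i) * Equiv.swap ((σ * Equiv.swap k i)⁻¹ i) i = σ := by
          rw [h2, mul_assoc, Equiv.swap_mul_self, mul_one]
        exact Prod.ext h3 h2
      · -- right inverse
        intro τ hτ
        dsimp only
        rw [mul_assoc, Equiv.swap_mul_self, mul_one]
      · -- values agree
        rintro ⟨σ, k⟩ hp
        rw [Finset.mem_product] at hp
        obtain ⟨hσ, hk⟩ := hp
        dsimp only at hσ hk ⊢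
        rw [mem_T_iff] at hσ
        rw [Finset.mem_filter, Fin.lt_def] at hk
        have hσi : σ i = i := hσ i (by omega)
        have hki : k ≠ i := fun h => by rw [h] at hk; omega
        have hcyc := cycles_mul_swap σ hσi hki
        have h1 : n - m ≤ cycles σ := fix_lower n (le_of_lt hm') hσ
        congr 1
        congr 1
        omega

/-! ### Invertibility of the factors -/

instance monAlgFinite : Module.Finite ℂ (MonoidAlgebra ℂ (Equiv.Perm (Fin n))) :=
  Module.Finite.equiv (MonoidAlgebra.coeffLinearEquiv ℂ).symm

theorem isUnit_of_mulLeft_injective {A : Type*} [Ring A] [Algebra ℂ A] [Module.Finite ℂ A]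
    {a : A} (h : ∀ v : A, a * v = 0 → v = 0) : IsUnit a := by
  have hL : Function.Injective (LinearMap.mulLeft ℂ a) := by
    intro x y hxy
    have : a * (x - y) = 0 := by
      rw [mul_sub, sub_eq_zero]
      exact hxy
    have := h _ this
    rwa [sub_eq_zero] at this
  have hs : Function.Surjective (LinearMap.mulLeft ℂ a) :=
    (LinearMap.injective_iff_surjective).mp hL
  obtain ⟨b, hb⟩ := hs 1
  have hb' : a * b = 1 := hb
  have hba : b * a = 1 := by
    apply hL
    show a * (b * a) = a * 1
    rw [← mul_assoc, hb', one_mul, mul_one]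
  exact ⟨⟨a, b, hb', hba⟩, rfl⟩

/-- Each factor `d·1 + J_{i+1}` is a unit (diagonal dominance). -/
theorem isUnit_F (hn : 1 ≤ n) (hd : n ≤ d) (i : Fin n) : IsUnit (F n d i) := by
  set K := Finset.univ.filter (fun k : Fin n => k < i) with hK
  set a := MonoidAlgebra.single (1 : Equiv.Perm (Fin n)) (d : ℂ) +
      ∑ k ∈ K, MonoidAlgebra.single (Equiv.swap k i) (1 : ℂ) with ha
  show IsUnit a
  apply isUnit_of_mulLeft_injective
  intro v hv
  by_contra hv0
  obtain ⟨σ₀, -, hmax⟩ := Finset.exists_max_image (Finset.univ : Finset (Equiv.Perm (Fin n)))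
    (fun τ => ‖v.coeff τ‖) ⟨1, mem_univ 1⟩
  set M := ‖v.coeff σ₀‖ with hM
  have hMpos : 0 < M := by
    obtain ⟨τ, hτ⟩ : ∃ τ, v.coeff τ ≠ 0 := by
      by_contra hcon
      push_neg at hcon
      exact hv0 (MonoidAlgebra.ext (Finsupp.ext hcon))
    calc 0 < ‖v.coeff τ‖ := norm_pos_iff.mpr hτ
    _ ≤ M := hmax τ (mem_univ τ)
  have hval : (d : ℂ) * v.coeff σ₀ + ∑ k ∈ K, v.coeff ((Equiv.swap k i)⁻¹ * σ₀) = 0 := by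
    have h0 : (a * v).coeff σ₀ = 0 := by rw [hv]; rfl
    rw [ha, add_mul, Finset.sum_mul] at h0
    rw [MonoidAlgebra.coeff_add, Finsupp.add_apply] at h0
    rw [MonoidAlgebra.coeff_single_mul_apply] at h0
    rw [inv_one, one_mul] at h0
    rw [MonoidAlgebra.coeff_sum, Finsupp.finset_sum_apply] at h0
    calc (d : ℂ) * v.coeff σ₀ + ∑ k ∈ K, v.coeff ((Equiv.swap k i)⁻¹ * σ₀)
        = (d : ℂ) * v.coeff σ₀ + ∑ k ∈ K,
          (MonoidAlgebra.single (Equiv.swap k i) (1:ℂ) * v).coeff σ₀ := by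
          congr 1
          apply Finset.sum_congr rfl
          intro k hk
          rw [MonoidAlgebra.coeff_single_mul_apply, one_mul]
    _ = 0 := h0
  have hKcard : K.card ≤ n - 1 := by
    have hsub : K ⊆ Finset.univ.erase i := by
      intro k hk
      rw [hK, Finset.mem_filter] at hk
      exact Finset.mem_erase.2 ⟨ne_of_lt hk.2, mem_univ k⟩
    calc K.card ≤ (Finset.univ.erase i).card := Finset.card_le_card hsub
    _ = n - 1 := by rw [Finset.card_erase_of_mem (mem_univ i), Finset.card_univ, Fintype.card_fin]
  have hbound : (d : ℝ) * M ≤ (K.card : ℝ) * M := by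
    have h1 : (d : ℂ) * v.coeff σ₀ = -∑ k ∈ K, v.coeff ((Equiv.swap k i)⁻¹ * σ₀) :=
      eq_neg_of_add_eq_zero_left hval
    calc (d : ℝ) * M = ‖(d : ℂ) * v.coeff σ₀‖ := by
          rw [norm_mul, Complex.norm_natCast]
    _ = ‖∑ k ∈ K, v.coeff ((Equiv.swap k i)⁻¹ * σ₀)‖ := by rw [h1, norm_neg]
    _ ≤ ∑ k ∈ K, ‖v.coeff ((Equiv.swap k i)⁻¹ * σ₀)‖ := norm_sum_le _ _
    _ ≤ ∑ _k ∈ K, M := Finset.sum_le_sum (fun k _ => hmax _ (mem_univ _))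
    _ = (K.card : ℝ) * M := by rw [Finset.sum_const, nsmul_eq_mul]
  have hdK : (d : ℝ) ≤ (K.card : ℝ) := le_of_mul_le_mul_right hbound hMpos
  have : d ≤ K.card := Nat.cast_le.mp hdK
  omega

theorem isUnit_P (hn : 1 ≤ n) (hd : n ≤ d) (m : ℕ) : IsUnit (P n d m) := by
  induction m with
  | zero => exact isUnit_one
  | succ m ih =>
    rw [P]
    split_ifs with h
    · exact ih.mul (isUnit_F n d hn hd ⟨m, h⟩)
    · exact ih

theorem T_top : T n n = Finset.univ := by
  ext σ
  simp only [mem_T_iff, mem_univ, iff_true]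
  intro j hj
  exact absurd j.isLt (by omega)

end CollinsAux

/-- Collins' theorem: for every integer `d ≥ n`, the element
`Σ_σ d^{cycles(σ)} σ = ∏_{i=1}^n (d·1 + J_i)` is a unit in the group algebra. -/
theorem isUnit_sum_d_pow_cycles (n : ℕ) (hn : 1 ≤ n) (d : ℕ) (hd : n ≤ d) :
    IsUnit (∑ σ : Equiv.Perm (Fin n), MonoidAlgebra.single σ ((d : ℂ) ^ cycles σ)) := by
  have hkey := CollinsAux.P_eq n d n (le_refl n)
  rw [CollinsAux.T_top] at hkey
  have hsum : (∑ σ : Equiv.Perm (Fin n), MonoidAlgebra.single σ ((d : ℂ) ^ cycles σ))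
      = CollinsAux.P n d n := by
    rw [hkey]
    apply Finset.sum_congr rfl
    intro σ _
    congr 1
    rw [Nat.sub_self, Nat.sub_zero]
  rw [hsum]
  exact CollinsAux.isUnit_P n d hn hd n
end

section
/- The Weingarten integrals define a class function: for every integer d ≥ n and all σ, π ∈ S_n, ∫_{U(d)} ∏_{i=1}^n u_{ii} · conj(u_{i σ(i)}) dU = ∫_{U(d)} ∏_{i=1}^n u_{ii} · conj(u_{i (πσπ^{-1})(i)}) dU. -/
open MeasureTheory

/-- The Borel σ-algebra on the unitary group `U(d)`. -/
noncomputable instance (d : ℕ) : MeasurableSpace (Matrix.unitaryGroup (Fin d) ℂ) :=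
  borel _

instance (d : ℕ) : BorelSpace (Matrix.unitaryGroup (Fin d) ℂ) := ⟨rfl⟩

instance (d : ℕ) : ContinuousInv (Matrix.unitaryGroup (Fin d) ℂ) := by
  constructor
  have h : Continuous fun u : Matrix.unitaryGroup (Fin d) ℂ =>
      ((u⁻¹ : Matrix.unitaryGroup (Fin d) ℂ) : Matrix (Fin d) (Fin d) ℂ) := by
    simp only [← Unitary.star_eq_inv, Unitary.coe_star]
    exact continuous_star.comp continuous_subtype_val
  exact continuous_induced_rng.2 h

instance (d : ℕ) : IsTopologicalGroup (Matrix.unitaryGroup (Fin d) ℂ) := {}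

set_option maxHeartbeats 1000000 in
instance (d : ℕ) : CompactSpace (Matrix.unitaryGroup (Fin d) ℂ) := by
  have h1 : IsClosed {U : Matrix (Fin d) (Fin d) ℂ | star U * U = 1} :=
    isClosed_eq (Continuous.mul continuous_star continuous_id) continuous_const
  have h2 : IsClosed {U : Matrix (Fin d) (Fin d) ℂ | U * star U = 1} :=
    isClosed_eq (Continuous.mul continuous_id continuous_star) continuous_const
  have hclosed : IsClosed (Matrix.unitaryGroup (Fin d) ℂ : Set (Matrix (Fin d) (Fin d) ℂ)) := by
    have hset : (Matrix.unitaryGroup (Fin d) ℂ : Set (Matrix (Fin d) (Fin d) ℂ)) =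
        {U : Matrix (Fin d) (Fin d) ℂ | star U * U = 1} ∩
          {U : Matrix (Fin d) (Fin d) ℂ | U * star U = 1} :=
      Set.ext fun U => Unitary.mem_iff
    rw [hset]
    exact h1.inter h2
  have hK : IsCompact (Set.pi Set.univ (fun _ : Fin d => Set.pi Set.univ
      (fun _ : Fin d => Metric.closedBall (0 : ℂ) 1)) :
        Set (Matrix (Fin d) (Fin d) ℂ)) :=
    isCompact_univ_pi fun _ => isCompact_univ_pi fun _ =>
      ProperSpace.isCompact_closedBall _ _
  have hcpt : IsCompact (Matrix.unitaryGroup (Fin d) ℂ : Set (Matrix (Fin d) (Fin d) ℂ)) := by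
    refine hK.of_isClosed_subset hclosed ?_
    intro U hU
    intro i _ j _
    rw [Metric.mem_closedBall, dist_zero_right]
    exact entry_norm_bound_of_unitary hU i j
  exact isCompact_iff_compactSpace.mp hcpt

theorem PEquiv.equiv_toPEquiv_toMatrix {n α : Type*} [DecidableEq n] [Zero α] [One α]
    (σ : Equiv n n) (i j : n) : σ.toPEquiv.toMatrix i j = (1 : Matrix n n α) (σ i) j := by
  simp [Matrix.one_apply, Pi.single_apply, eq_comm]

lemma weingarten_aux_right_invariant {d : ℕ}
    (μ : Measure (Matrix.unitaryGroup (Fin d) ℂ)) [μ.IsHaarMeasure]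
    [IsProbabilityMeasure μ] : μ.IsMulRightInvariant := by
  constructor
  intro g
  have h1 : IsProbabilityMeasure (Measure.map (· * g) μ) :=
    Measure.isProbabilityMeasure_map (measurable_mul_const g).aemeasurable
  exact Measure.isHaarMeasure_eq_of_isProbabilityMeasure _ μ

lemma weingarten_aux_conj {G : Type*} [Group G] [MeasurableSpace G] [MeasurableMul G]
    (μ : Measure G) [μ.IsMulLeftInvariant] [μ.IsMulRightInvariant] (f g : G → ℂ)
    (a b : G) (h : ∀ U, f (a * U * b) = g U) : ∫ U, f U ∂μ = ∫ U, g U ∂μ := by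
  rw [← integral_mul_left_eq_self f a,
    ← integral_mul_right_eq_self (fun V => f (a * V)) b]
  exact integral_congr_ae (Filter.Eventually.of_forall fun U => by
    show f (a * (U * b)) = g U
    rw [← mul_assoc]; exact h U)

/-- The Weingarten integrals define a class function: for all `σ, π ∈ S_n`,
`∫_{U(d)} ∏ᵢ u_{ii} conj(u_{iσ(i)}) dU = ∫_{U(d)} ∏ᵢ u_{ii} conj(u_{i(πσπ⁻¹)(i)}) dU`. -/
theorem weingarten_integral_conj_invariant (n : ℕ) (hn : 1 ≤ n) (d : ℕ) (hd : n ≤ d)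
    (μ : Measure (Matrix.unitaryGroup (Fin d) ℂ)) (hμ : μ.IsHaarMeasure)
    (hprob : IsProbabilityMeasure μ) (σ π : Equiv.Perm (Fin n)) :
    ∫ U : Matrix.unitaryGroup (Fin d) ℂ,
        (∏ i : Fin n,
          (U : Matrix (Fin d) (Fin d) ℂ) (Fin.castLE hd i) (Fin.castLE hd i)) *
        starRingEnd ℂ (∏ i : Fin n,
          (U : Matrix (Fin d) (Fin d) ℂ) (Fin.castLE hd i) (Fin.castLE hd (σ i))) ∂μ =
      ∫ U : Matrix.unitaryGroup (Fin d) ℂ,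
        (∏ i : Fin n,
          (U : Matrix (Fin d) (Fin d) ℂ) (Fin.castLE hd i) (Fin.castLE hd i)) *
        starRingEnd ℂ (∏ i : Fin n,
          (U : Matrix (Fin d) (Fin d) ℂ) (Fin.castLE hd i)
            (Fin.castLE hd ((π * σ * π⁻¹) i))) ∂μ := by
  classical
  haveI := hμ
  haveI := hprob
  haveI : μ.IsMulRightInvariant := weingarten_aux_right_invariant μ
  set c : Fin n → Fin d := Fin.castLE hd with hc
  set e : Equiv.Perm (Fin d) := π.viaEmbedding (Fin.castLEEmb hd) with he'
  have he : ∀ i : Fin n, e (c i) = c (π i) := fun i =>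
    π.viaEmbedding_apply (Fin.castLEEmb hd) i
  set A : Matrix (Fin d) (Fin d) ℂ := e.toPEquiv.toMatrix with hA
  set B : Matrix (Fin d) (Fin d) ℂ := e.symm.toPEquiv.toMatrix with hB
  have hstarA : star A = B := by
    ext i j
    simp only [Matrix.star_apply, hA, hB, PEquiv.equiv_toPEquiv_toMatrix, Matrix.one_apply]
    rw [apply_ite (star : ℂ → ℂ), star_one, star_zero]
    congr 1
    exact propext ⟨fun h => by rw [← h, Equiv.symm_apply_apply],
      fun h => by rw [← h, Equiv.apply_symm_apply]⟩
  have hBA : B * A = 1 := by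
    rw [hB, PEquiv.toMatrix_toPEquiv_mul]
    ext i j
    simp only [hA, Matrix.submatrix_apply, id_eq, PEquiv.equiv_toPEquiv_toMatrix]
    rw [Equiv.apply_symm_apply]
  have hAB : A * B = 1 := by
    rw [hA, PEquiv.toMatrix_toPEquiv_mul]
    ext i j
    simp only [hB, Matrix.submatrix_apply, id_eq, PEquiv.equiv_toPEquiv_toMatrix]
    rw [Equiv.symm_apply_apply]
  have hAmem : A ∈ Matrix.unitaryGroup (Fin d) ℂ :=
    Unitary.mem_iff.2 ⟨by rw [hstarA]; exact hBA, by rw [hstarA]; exact hAB⟩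
  have hBmem : B ∈ Matrix.unitaryGroup (Fin d) ℂ := by
    have : star B = A := by rw [← hstarA, star_star]
    exact Unitary.mem_iff.2 ⟨by rw [this]; exact hAB, by rw [this]; exact hBA⟩
  set a : Matrix.unitaryGroup (Fin d) ℂ := ⟨A, hAmem⟩ with ha
  set b : Matrix.unitaryGroup (Fin d) ℂ := ⟨B, hBmem⟩ with hb
  refine weingarten_aux_conj μ _ _ a b fun U => ?_
  have hcoe : ((a * U * b : Matrix.unitaryGroup (Fin d) ℂ) : Matrix (Fin d) (Fin d) ℂ)
      = (U : Matrix (Fin d) (Fin d) ℂ).submatrix e e := by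
    have : ((a * U * b : Matrix.unitaryGroup (Fin d) ℂ) : Matrix (Fin d) (Fin d) ℂ)
        = A * (U : Matrix (Fin d) (Fin d) ℂ) * B := rfl
    rw [this, hA, hB, PEquiv.toMatrix_toPEquiv_mul, PEquiv.mul_toMatrix_toPEquiv,
      Matrix.submatrix_submatrix]
    simp [Function.comp]
  rw [hcoe]
  simp only [Matrix.submatrix_apply, he]
  congr 1
  · exact Equiv.prod_comp π fun i => (U : Matrix (Fin d) (Fin d) ℂ) (c i) (c i)
  · congr 1
    rw [← Equiv.prod_comp π
      (fun j => (U : Matrix (Fin d) (Fin d) ℂ) (c j) (c ((π * σ * π⁻¹) j)))]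
    refine Finset.prod_congr rfl fun i _ => ?_
    simp [Equiv.Perm.mul_apply]
end
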